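/- For every n ≥ 0, Σ_{π ∈ P₂^{sym}(2n), all cycles of π have length 1} q₋^{c₋(π)} = C_n·(1+q₋)ⁿ, where C_n = (1/(n+1))·binom(2n,n) is the n-th Catalan number; equivalently, the symmetric pair partitions all of whose cycles have length 1 are in bijection with noncrossing pair partitions of {1,…,2n} equipped with a sign ±1 on each pair, the number of negative cycles being the number of minus signs. -/

import Mathlib

noncomputable section

namespace TypeB

/-! ### Symmetric pair partitions of [±2n] and their cycles -/

/-- Negation of a set of integers. -/
def negSet (B : Set ℤ) : Set ℤ := (fun x : ℤ => -x) '' B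

/-- The set [±m] = {−m,…,−1,1,…,m} ⊆ ℤ. -/
def pmSet (m : ℕ) : Set ℤ := {i | i ≠ 0 ∧ |i| ≤ (m : ℤ)}

/-- π is a set partition of S. -/
def IsPartitionOn (S : Set ℤ) (π : Set (Set ℤ)) : Prop :=
  (∀ B ∈ π, B ⊆ S ∧ B.Nonempty) ∧ (∀ x ∈ S, ∃! B, B ∈ π ∧ x ∈ B)

def IsPairB (B : Set ℤ) : Prop := ∃ a b : ℤ, a ≠ b ∧ B = {a, b}

def IsSingleB (B : Set ℤ) : Prop := ∃ a : ℤ, B = {a}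

/-- P₂^{sym}(2n): partitions of [±2n] into pairs, invariant under negation, with no
pair equal to its own negation. -/
def P2sym (n : ℕ) (π : Set (Set ℤ)) : Prop :=
  IsPartitionOn (pmSet (2 * n)) π ∧ (∀ B ∈ π, IsPairB B) ∧
  (∀ B ∈ π, negSet B ∈ π) ∧ (∀ B ∈ π, negSet B ≠ B)

/-- Noncrossing partitions: no i < j < k < l with i,k in one block and j,l in another. -/
def NonCrossing (π : Set (Set ℤ)) : Prop :=
  ¬ ∃ (i j k l : ℤ) (B C : Set ℤ), B ∈ π ∧ C ∈ π ∧ B ≠ C ∧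
    i < j ∧ j < k ∧ k < l ∧ i ∈ B ∧ k ∈ B ∧ j ∈ C ∧ l ∈ C

/-- Right legs of positive pairs. -/
def posRightLegs (π : Set (Set ℤ)) : Set ℤ :=
  {b | ∃ a : ℤ, a < b ∧ ({a, b} : Set ℤ) ∈ π ∧ -a < b}

/-- Left legs of negative pairs. -/
def negLeftLegs (π : Set (Set ℤ)) : Set ℤ :=
  {a | ∃ b : ℤ, a < b ∧ ({a, b} : Set ℤ) ∈ π ∧ ¬(-a < b)}

/-- Pairs of ρ do not cover singletons of ρ. -/
def NoCoveredSingleton (ρ : Set (Set ℤ)) : Prop :=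
  ¬ ∃ a b c : ℤ, a < c ∧ c < b ∧ ({a, b} : Set ℤ) ∈ ρ ∧ ({c} : Set ℤ) ∈ ρ

/-- The defining properties of the noncrossing partition π̂ of [±m] associated with π:
a partition into pairs and singletons, noncrossing, symmetric, with every block inside
{1,…,m} or {−m,…,−1}, having the same right legs of positive pairs and the same left
legs of negative pairs as π, and whose pairs do not cover singletons. -/
def HatProps (m : ℕ) (π ρ : Set (Set ℤ)) : Prop :=
  IsPartitionOn (pmSet m) ρ ∧
  (∀ B ∈ ρ, IsPairB B ∨ IsSingleB B) ∧
  NonCrossing ρ ∧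
  (∀ B ∈ ρ, negSet B ∈ ρ) ∧
  (∀ B ∈ ρ, (∀ x ∈ B, 0 < x) ∨ (∀ x ∈ B, x < 0)) ∧
  posRightLegs ρ = posRightLegs π ∧
  negLeftLegs ρ = negLeftLegs π ∧
  NoCoveredSingleton ρ

open Classical in
/-- The partition π̂ associated with π (it exists and is unique). -/
def hatOf (m : ℕ) (π : Set (Set ℤ)) : Set (Set ℤ) :=
  if h : ∃ ρ, HatProps m π ρ then h.choose else ∅

/-- Two pairs A,B of π are connected when some block C of ρ = π̂ meets both. -/
def connStep (π ρ : Set (Set ℤ)) (A B : Set ℤ) : Prop :=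
  A ∈ π ∧ B ∈ π ∧ ∃ C ∈ ρ, (A ∩ C).Nonempty ∧ (B ∩ C).Nonempty

/-- The cycle (connected component) of pairs of π through A. -/
def compOf (π ρ : Set (Set ℤ)) (A : Set ℤ) : Set (Set ℤ) :=
  {B | Relation.ReflTransGen (connStep π ρ) A B}

/-- The set of all cycles (connected components of pairs). -/
def CompsOf (π ρ : Set (Set ℤ)) : Set (Set (Set ℤ)) :=
  {K | ∃ A ∈ π, K = compOf π ρ A}

/-- A component is negative when its support is invariant under negation. -/
def NegComp (K : Set (Set ℤ)) : Prop := negSet (⋃₀ K) = ⋃₀ K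

/-- c₋(π): the number of negative cycles of π ∈ P₂^{sym}(2n). -/
def cNeg (n : ℕ) (π : Set (Set ℤ)) : ℕ :=
  {K ∈ CompsOf π (hatOf (2 * n) π) | NegComp K}.ncard

/-- c(π): the number of cycles of π ∈ P₂^{sym}(2n); positive cycles come in mirror
pairs, each mirror pair counted once. -/
def cCount (n : ℕ) (π : Set (Set ℤ)) : ℕ :=
  cNeg n π + {K ∈ CompsOf π (hatOf (2 * n) π) | ¬NegComp K}.ncard / 2



/-- All cycles of π ∈ P₂^{sym}(2n) have length 1: each negative cycle consists of 2
pairs (length m' with 2m' pairs, so m' = 1) and each positive cycle consists of a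
single pair of π (in each member of its mirror pair of components). -/
def AllCyclesLengthOne (n : ℕ) (π : Set (Set ℤ)) : Prop :=
  ∀ K ∈ CompsOf π (hatOf (2 * n) π),
    (NegComp K → K.ncard = 2) ∧ (¬NegComp K → K.ncard = 1)


open Finset in
/-- Height function of the lattice path determined by the "closer" set `R`. -/
def ht (R : Finset ℤ) (k : ℤ) : ℤ := k - 2 * ((R.filter (fun x => x ≤ k)).card : ℤ)

lemma ht_step_mem {R : Finset ℤ} {k : ℤ} (hk : k ∈ R) : ht R k = ht R (k - 1) - 1 := by
  have h : R.filter (fun x => x ≤ k) = insert k (R.filter (fun x => x ≤ k - 1)) := by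
    ext x
    simp only [Finset.mem_filter, Finset.mem_insert]
    constructor
    · rintro ⟨hx, hxk⟩
      rcases eq_or_lt_of_le hxk with h | h
      · exact Or.inl h
      · exact Or.inr ⟨hx, by omega⟩
    · rintro (rfl | ⟨hx, hxk⟩)
      · exact ⟨hk, le_refl _⟩
      · exact ⟨hx, by omega⟩
  have hnot : k ∉ R.filter (fun x => x ≤ k - 1) := by
    simp only [Finset.mem_filter]; omega
  rw [ht, ht, h, Finset.card_insert_of_notMem hnot]
  push_cast
  ring

lemma ht_step_not {R : Finset ℤ} {k : ℤ} (hk : k ∉ R) : ht R k = ht R (k - 1) + 1 := by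
  have h : R.filter (fun x => x ≤ k) = R.filter (fun x => x ≤ k - 1) := by
    ext x
    simp only [Finset.mem_filter]
    constructor
    · rintro ⟨hx, hxk⟩
      refine ⟨hx, ?_⟩
      rcases eq_or_lt_of_le hxk with h | h
      · exact absurd (h ▸ hx) hk
      · omega
    · rintro ⟨hx, hxk⟩; exact ⟨hx, by omega⟩
  rw [ht, ht, h]; ring

lemma ht_step_cases (R : Finset ℤ) (k : ℤ) :
    ht R k = ht R (k - 1) - 1 ∨ ht R k = ht R (k - 1) + 1 := by
  by_cases hk : k ∈ R
  · exact Or.inl (ht_step_mem hk)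
  · exact Or.inr (ht_step_not hk)

lemma ht_of_nonpos {R : Finset ℤ} (hR : ∀ x ∈ R, 1 ≤ x) {k : ℤ} (hk : k ≤ 0) : ht R k = k := by
  have : R.filter (fun x => x ≤ k) = ∅ := by
    rw [Finset.filter_eq_empty_iff]
    intro x hx
    have := hR x hx; omega
  rw [ht, this]; simp

/-- Discrete IVT: greatest point before `v` where the height comes down to `c`. -/
lemma exists_max_ht {R : Finset ℤ} {u v c : ℤ} (huv : u ≤ v) (hu : ht R u ≤ c)
    (hv : c < ht R v) :
    ∃ j, u ≤ j ∧ j < v ∧ ht R j = c ∧ ∀ k, j < k → k ≤ v → c < ht R k := by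
  have huv' : u < v := by
    rcases eq_or_lt_of_le huv with rfl | h
    · omega
    · exact h
  set S := (Finset.Icc u (v - 1)).filter (fun j => ht R j ≤ c) with hS
  have huS : u ∈ S := by
    simp only [hS, Finset.mem_filter, Finset.mem_Icc]
    exact ⟨⟨le_refl _, by omega⟩, hu⟩
  have hne : S.Nonempty := ⟨u, huS⟩
  set j := S.max' hne with hj
  have hjS : j ∈ S := S.max'_mem hne
  simp only [hS, Finset.mem_filter, Finset.mem_Icc] at hjS
  obtain ⟨⟨hju, hjv⟩, hjc⟩ := hjS
  have hgt : ∀ k, j < k → k ≤ v → c < ht R k := by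
    intro k hk1 hk2
    rcases eq_or_lt_of_le hk2 with rfl | hk3
    · exact hv
    · by_contra hcon
      push_neg at hcon
      have hkS : k ∈ S := by
        simp only [hS, Finset.mem_filter, Finset.mem_Icc]
        exact ⟨⟨by omega, by omega⟩, hcon⟩
      have := S.le_max' k hkS
      omega
  have hjc' : ht R j = c := by
    have h1 : c < ht R (j + 1) := hgt (j + 1) (by omega) (by omega)
    rcases ht_step_cases R (j + 1) with h | h <;> simp only [add_sub_cancel_right] at h <;> omega
  exact ⟨j, hju, by omega, hjc', hgt⟩

/-- Discrete IVT: least point after `u` where the height comes down to `c`;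
the step into it is a down-step. -/
lemma exists_min_ht {R : Finset ℤ} {u v c : ℤ} (huv : u ≤ v) (hu : c < ht R u)
    (hv : ht R v ≤ c) :
    ∃ j, u < j ∧ j ≤ v ∧ ht R j = c ∧ j ∈ R ∧ ∀ k, u ≤ k → k < j → c < ht R k := by
  have huv' : u < v := by
    rcases eq_or_lt_of_le huv with rfl | h
    · omega
    · exact h
  set S := (Finset.Icc (u + 1) v).filter (fun j => ht R j ≤ c) with hS
  have hvS : v ∈ S := by
    simp only [hS, Finset.mem_filter, Finset.mem_Icc]
    exact ⟨⟨by omega, le_refl _⟩, hv⟩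
  have hne : S.Nonempty := ⟨v, hvS⟩
  set j := S.min' hne with hj
  have hjS : j ∈ S := S.min'_mem hne
  simp only [hS, Finset.mem_filter, Finset.mem_Icc] at hjS
  obtain ⟨⟨hju, hjv⟩, hjc⟩ := hjS
  have hgt : ∀ k, u ≤ k → k < j → c < ht R k := by
    intro k hk1 hk2
    rcases eq_or_lt_of_le hk1 with rfl | hk3
    · exact hu
    · by_contra hcon
      push_neg at hcon
      have hkS : k ∈ S := by
        simp only [hS, Finset.mem_filter, Finset.mem_Icc]
        exact ⟨⟨by omega, by omega⟩, hcon⟩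
      have := S.min'_le k hkS
      omega
  have hdown : ht R j = ht R (j - 1) - 1 := by
    have h1 : c < ht R (j - 1) := hgt (j - 1) (by omega) (by omega)
    rcases ht_step_cases R j with h | h <;> omega
  have hjc' : ht R j = c := by
    have h1 : c < ht R (j - 1) := hgt (j - 1) (by omega) (by omega)
    omega
  have hmem : j ∈ R := by
    by_contra hcon
    have := ht_step_not (R := R) hcon
    omega
  exact ⟨j, by omega, hjv, hjc', hmem, hgt⟩

/-- `a` is the opener matched (by nearest-opener parenthesis matching) to the closer `b`. -/
def Matches (R : Finset ℤ) (a b : ℤ) : Prop :=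
  1 ≤ a ∧ a < b ∧ b ∈ R ∧ ht R (a - 1) = ht R b ∧ ∀ k, a ≤ k → k < b → ht R b < ht R k

/-- `R` is the closer set of a Dyck-path of semilength `n`. -/
def Ballot (n : ℕ) (R : Finset ℤ) : Prop :=
  R ⊆ Finset.Icc 1 (2 * n : ℤ) ∧ R.card = n ∧ ∀ k, 0 ≤ k → 0 ≤ ht R k

namespace Ballot

variable {n : ℕ} {R : Finset ℤ}

lemma one_le (hB : Ballot n R) {x : ℤ} (hx : x ∈ R) : 1 ≤ x := by
  have := hB.1 hx; rw [Finset.mem_Icc] at this; omega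

lemma le_two_n (hB : Ballot n R) {x : ℤ} (hx : x ∈ R) : x ≤ 2 * n := by
  have := hB.1 hx; rw [Finset.mem_Icc] at this; omega

lemma ht_zero (hB : Ballot n R) : ht R 0 = 0 := ht_of_nonpos (fun x hx => hB.one_le hx) le_rfl

lemma ht_final (hB : Ballot n R) : ht R (2 * n) = 0 := by
  have h : R.filter (fun x => x ≤ (2 * n : ℤ)) = R := by
    rw [Finset.filter_eq_self]
    intro x hx; exact hB.le_two_n hx
  rw [ht, h, hB.2.1]; ring

lemma matches_of_mem (hB : Ballot n R) {b : ℤ} (hb : b ∈ R) : ∃ a, Matches R a b := by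
  have hb1 : 1 ≤ b := hB.one_le hb
  have hb2 : b ≤ 2 * n := hB.le_two_n hb
  have hdown : ht R b = ht R (b - 1) - 1 := ht_step_mem hb
  have h0 : ht R 0 ≤ ht R b := by
    rw [hB.ht_zero]
    exact hB.2.2 b (by omega)
  have hv : ht R b < ht R (b - 1) := by omega
  obtain ⟨j, hj0, hjv, hjc, hgt⟩ := exists_max_ht (u := 0) (v := b - 1) (by omega) h0 hv
  refine ⟨j + 1, by omega, by omega, hb, by simpa using hjc, ?_⟩
  intro k hk1 hk2
  exact hgt k (by omega) (by omega)

lemma matches_of_opener (hB : Ballot n R) {a : ℤ} (ha1 : 1 ≤ a) (ha2 : a ≤ 2 * n) (ha : a ∉ R) :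
    ∃ b, Matches R a b := by
  have hup : ht R a = ht R (a - 1) + 1 := ht_step_not ha
  have hu : ht R (a - 1) < ht R a := by omega
  have hv : ht R (2 * n) ≤ ht R (a - 1) := by
    rw [hB.ht_final]
    exact hB.2.2 (a - 1) (by omega)
  obtain ⟨j, hj1, hj2, hjc, hjR, hgt⟩ :=
    exists_min_ht (u := a) (v := 2 * n) (by omega) hu hv
  refine ⟨j, ha1, hj1, hjR, by omega, ?_⟩
  intro k hk1 hk2
  have := hgt k hk1 hk2
  omega

end Ballot

lemma Matches.not_mem {R : Finset ℤ} {a b : ℤ} (h : Matches R a b) : a ∉ R := by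
  obtain ⟨h1, h2, h3, h4, h5⟩ := h
  intro hmem
  have hstep := ht_step_mem hmem
  have := h5 a le_rfl h2
  omega

lemma matches_unique_left {R : Finset ℤ} {a a' b : ℤ} (h : Matches R a b)
    (h' : Matches R a' b) : a = a' := by
  by_contra hne
  have ha'b : a' < b := h'.2.1
  have hab : a < b := h.2.1
  rcases lt_or_gt_of_ne hne with hlt | hlt
  · have := h.2.2.2.2 (a' - 1) (by omega) (by omega)
    have := h'.2.2.2.1
    omega
  · have := h'.2.2.2.2 (a - 1) (by omega) (by omega)
    have := h.2.2.2.1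
    omega

lemma matches_unique_right {R : Finset ℤ} {a b b' : ℤ} (h : Matches R a b)
    (h' : Matches R a b') : b = b' := by
  by_contra hne
  rcases lt_or_gt_of_ne hne with hlt | hlt
  · have := h'.2.2.2.2 b (h.2.1.le) hlt
    have h4 := h.2.2.2.1
    have h4' := h'.2.2.2.1
    omega
  · have := h.2.2.2.2 b' (h'.2.1.le) hlt
    have h4 := h.2.2.2.1
    have h4' := h'.2.2.2.1
    omega

lemma matches_nocross {R : Finset ℤ} {a b a' b' : ℤ} (h : Matches R a b)
    (h' : Matches R a' b') (h1 : a < a') (h2 : a' < b) (h3 : b < b') : False := by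
  have hb : ht R b' < ht R b := by
    have := h'.2.2.2.2 b h2.le h3
    omega
  have hab : ht R b < ht R (a' - 1) := h.2.2.2.2 (a' - 1) (by omega) (by omega)
  have := h'.2.2.2.1
  omega


/-! ### Basic set helpers -/

lemma negSet_pair (a b : ℤ) : negSet {a, b} = {-a, -b} := by
  simp [negSet, Set.image_insert_eq]

lemma negSet_negSet (B : Set ℤ) : negSet (negSet B) = B := by
  simp only [negSet, ← Set.image_comp]
  have : ((fun x : ℤ => -x) ∘ fun x : ℤ => -x) = id := by funext x; simp
  rw [this, Set.image_id]

lemma mem_negSet {B : Set ℤ} {x : ℤ} : x ∈ negSet B ↔ -x ∈ B := by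
  constructor
  · rintro ⟨y, hy, rfl⟩; simpa using hy
  · intro h; exact ⟨-x, h, by simp⟩

lemma mem_pmSet {m : ℕ} {x : ℤ} : x ∈ pmSet m ↔ x ≠ 0 ∧ |x| ≤ (m : ℤ) := Iff.rfl

lemma mem_pm2 {n : ℕ} {x : ℤ} : x ∈ pmSet (2 * n) ↔ x ≠ 0 ∧ -(2 * (n : ℤ)) ≤ x ∧ x ≤ 2 * n := by
  rw [mem_pmSet, abs_le]
  constructor
  · rintro ⟨h1, h2, h3⟩; refine ⟨h1, by push_cast at h2; omega, by push_cast at h3; omega⟩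
  · rintro ⟨h1, h2, h3⟩; refine ⟨h1, by push_cast; omega, by push_cast; omega⟩

lemma neg_mem_pmSet {m : ℕ} {x : ℤ} (h : x ∈ pmSet m) : -x ∈ pmSet m := by
  obtain ⟨h1, h2⟩ := h
  exact ⟨by omega, by simpa using h2⟩

lemma pair_eq_pair_iff {a b c d : ℤ} (h1 : a < b) (h2 : c < d) :
    ({a, b} : Set ℤ) = {c, d} ↔ a = c ∧ b = d := by
  constructor
  · intro h
    have ha : a = c ∨ a = d := by
      have : a ∈ ({c, d} : Set ℤ) := h ▸ (by simp)
      simpa using this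
    have hb : b = c ∨ b = d := by
      have : b ∈ ({c, d} : Set ℤ) := h ▸ (by simp)
      simpa using this
    have hc : c = a ∨ c = b := by
      have : c ∈ ({a, b} : Set ℤ) := h ▸ (by simp)
      simpa using this
    rcases ha with rfl | rfl <;> rcases hb with rfl | rfl <;> omega
  · rintro ⟨rfl, rfl⟩; rfl

/-! ### The partner function of a pair partition -/

variable {n : ℕ} {π : Set (Set ℤ)}

lemma block_subset (hπ : P2sym n π) {B : Set ℤ} (hB : B ∈ π) : B ⊆ pmSet (2 * n) :=
  (hπ.1.1 B hB).1

lemma block_unique (hπ : P2sym n π) {x : ℤ} {B C : Set ℤ} (hB : B ∈ π) (hC : C ∈ π)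
    (hxB : x ∈ B) (hxC : x ∈ C) : B = C := by
  have hx : x ∈ pmSet (2 * n) := block_subset hπ hB hxB
  exact (hπ.1.2 x hx).unique ⟨hB, hxB⟩ ⟨hC, hxC⟩

lemma exists_partner (hπ : P2sym n π) {x : ℤ} (hx : x ∈ pmSet (2 * n)) :
    ∃ y, y ≠ x ∧ ({x, y} : Set ℤ) ∈ π := by
  obtain ⟨B, ⟨hBπ, hxB⟩, -⟩ := hπ.1.2 x hx
  obtain ⟨a, b, hab, rfl⟩ := hπ.2.1 B hBπ
  rcases (by simpa using hxB : x = a ∨ x = b) with rfl | rfl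
  · exact ⟨b, fun h => hab h.symm, hBπ⟩
  · exact ⟨a, fun h => hab h, by rwa [Set.pair_comm]⟩

open Classical in
/-- The partner of `x` in the pair partition `π`. -/
def prt (π : Set (Set ℤ)) (x : ℤ) : ℤ :=
  if h : ∃ y, y ≠ x ∧ ({x, y} : Set ℤ) ∈ π then h.choose else 0

lemma prt_spec (hπ : P2sym n π) {x : ℤ} (hx : x ∈ pmSet (2 * n)) :
    prt π x ≠ x ∧ ({x, prt π x} : Set ℤ) ∈ π := by
  rw [prt, dif_pos (exists_partner hπ hx)]
  exact (exists_partner hπ hx).choose_spec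

lemma prt_eq (hπ : P2sym n π) {x y : ℤ} (hy : y ≠ x) (hmem : ({x, y} : Set ℤ) ∈ π) :
    prt π x = y := by
  have hx : x ∈ pmSet (2 * n) := block_subset hπ hmem (by simp)
  obtain ⟨h1, h2⟩ := prt_spec hπ hx
  have := block_unique hπ hmem h2 (by simp : x ∈ ({x, y} : Set ℤ)) (by simp)
  have hyy : y ∈ ({x, prt π x} : Set ℤ) := this ▸ (by simp)
  rcases (by simpa using hyy : y = x ∨ y = prt π x) with rfl | h
  · exact absurd rfl hy
  · exact h.symm

lemma prt_mem (hπ : P2sym n π) {x : ℤ} (hx : x ∈ pmSet (2 * n)) :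
    prt π x ∈ pmSet (2 * n) :=
  block_subset hπ (prt_spec hπ hx).2 (by simp)

lemma prt_prt (hπ : P2sym n π) {x : ℤ} (hx : x ∈ pmSet (2 * n)) :
    prt π (prt π x) = x := by
  obtain ⟨h1, h2⟩ := prt_spec hπ hx
  exact prt_eq hπ (fun h => h1 h.symm) (by rwa [Set.pair_comm])

lemma prt_neg (hπ : P2sym n π) {x : ℤ} (hx : x ∈ pmSet (2 * n)) :
    prt π (-x) = -prt π x := by
  obtain ⟨h1, h2⟩ := prt_spec hπ hx
  have hmem : ({-x, -prt π x} : Set ℤ) ∈ π := by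
    have := hπ.2.2.1 _ h2
    rwa [negSet_pair] at this
  exact prt_eq hπ (by omega) hmem

lemma prt_ne_neg (hπ : P2sym n π) {x : ℤ} (hx : x ∈ pmSet (2 * n)) :
    prt π x ≠ -x := by
  intro h
  obtain ⟨h1, h2⟩ := prt_spec hπ hx
  rw [h] at h2
  have := hπ.2.2.2 _ h2
  apply this
  rw [negSet_pair]
  simp [Set.pair_comm]

lemma prt_ne_zero (hπ : P2sym n π) {x : ℤ} (hx : x ∈ pmSet (2 * n)) :
    prt π x ≠ 0 := (prt_mem hπ hx).1

/-- The finite set of right legs of positive pairs of `π`. -/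
def Rfin (n : ℕ) (π : Set (Set ℤ)) : Finset ℤ :=
  (Finset.Icc 1 (2 * n : ℤ)).filter (fun b => Classical.propDecidable (b ∈ posRightLegs π) |>.decide)

lemma mem_Rfin_raw {n : ℕ} {π : Set (Set ℤ)} {b : ℤ} :
    b ∈ Rfin n π ↔ (1 ≤ b ∧ b ≤ 2 * (n : ℤ)) ∧ b ∈ posRightLegs π := by
  rw [Rfin, Finset.mem_filter, Finset.mem_Icc]
  constructor
  · rintro ⟨h1, h2⟩
    exact ⟨h1, by simpa [decide_eq_true_iff] using h2⟩
  · rintro ⟨h1, h2⟩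
    exact ⟨h1, by simpa [decide_eq_true_iff] using h2⟩

lemma mem_posRightLegs_iff (hπ : P2sym n π) {b : ℤ} (hb : b ∈ pmSet (2 * n)) :
    b ∈ posRightLegs π ↔ |prt π b| < b := by
  constructor
  · rintro ⟨a, hab, hmem, hnab⟩
    have : prt π b = a := prt_eq hπ (by omega) (by rwa [Set.pair_comm])
    rw [this, abs_lt]
    omega
  · intro h
    obtain ⟨h1, h2⟩ := prt_spec hπ hb
    rw [abs_lt] at h
    exact ⟨prt π b, by omega, by rwa [Set.pair_comm], by omega⟩

lemma mem_Rfin_iff (hπ : P2sym n π) {b : ℤ} :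
    b ∈ Rfin n π ↔ 1 ≤ b ∧ b ≤ 2 * (n : ℤ) ∧ |prt π b| < b := by
  rw [mem_Rfin_raw]
  constructor
  · rintro ⟨⟨hb1, hb2⟩, hb3⟩
    have hbpm : b ∈ pmSet (2 * n) := mem_pm2.2 ⟨by omega, by omega, by omega⟩
    exact ⟨hb1, hb2, (mem_posRightLegs_iff hπ hbpm).1 hb3⟩
  · rintro ⟨hb1, hb2, hb3⟩
    have hbpm : b ∈ pmSet (2 * n) := mem_pm2.2 ⟨by omega, by omega, by omega⟩
    exact ⟨⟨hb1, hb2⟩, (mem_posRightLegs_iff hπ hbpm).2 hb3⟩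


/-! ### The right-leg set is a ballot set -/

lemma abs_prt_lt (hπ : P2sym n π) {b : ℤ} (hb : b ∈ Rfin n π) : |prt π b| < b :=
  ((mem_Rfin_iff hπ).1 hb).2.2

lemma abs_prt_pos (hπ : P2sym n π) {x : ℤ} (hx : x ∈ pmSet (2 * n)) :
    1 ≤ |prt π x| := Int.one_le_abs (prt_ne_zero hπ hx)

lemma pm_of_Rfin (hπ : P2sym n π) {b : ℤ} (hb : b ∈ Rfin n π) : b ∈ pmSet (2 * n) := by
  rw [mem_Rfin_iff hπ] at hb
  exact mem_pm2.2 ⟨by omega, by omega, by omega⟩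

lemma abs_prt_prt (hπ : P2sym n π) {x : ℤ} (hx : x ∈ pmSet (2 * n)) :
    |prt π (|prt π x|)| = |x| := by
  rcases abs_choice (prt π x) with h | h
  · rw [h, prt_prt hπ hx]
  · rw [h, prt_neg hπ (prt_mem hπ hx), prt_prt hπ hx, abs_neg]

lemma abs_prt_not_mem_Rfin (hπ : P2sym n π) {b : ℤ} (hb : b ∈ Rfin n π) :
    |prt π b| ∉ Rfin n π := by
  intro hmem
  have h1 := abs_prt_lt hπ hmem
  rw [abs_prt_prt hπ (pm_of_Rfin hπ hb)] at h1
  have h2 := abs_prt_lt hπ hb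
  have hb1 : 1 ≤ b := ((mem_Rfin_iff hπ).1 hb).1
  rw [abs_of_pos (by omega)] at h1
  omega

lemma abs_prt_injOn (hπ : P2sym n π) {b b' : ℤ} (hb : b ∈ pmSet (2 * n))
    (hb' : b' ∈ pmSet (2 * n)) (h1 : 1 ≤ b) (h1' : 1 ≤ b')
    (heq : |prt π b| = |prt π b'|) : b = b' := by
  rw [abs_eq_abs] at heq
  rcases heq with h | h
  · have := prt_prt hπ hb
    rw [h, prt_prt hπ hb'] at this
    omega
  · have h2 : prt π b = prt π (-b') := by
      rw [prt_neg hπ hb', h]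
    have := prt_prt hπ hb
    rw [h2, prt_prt hπ (neg_mem_pmSet hb')] at this
    omega

lemma mem_Rfin_abs_prt (hπ : P2sym n π) {a : ℤ} (ha1 : 1 ≤ a) (ha2 : a ≤ 2 * (n : ℤ))
    (ha : a ∉ Rfin n π) : |prt π a| ∈ Rfin n π ∧ a < |prt π a| := by
  have hapm : a ∈ pmSet (2 * n) := mem_pm2.2 ⟨by omega, by omega, by omega⟩
  have hne : |prt π a| ≠ a := by
    intro h
    rcases (abs_eq (by omega : (0:ℤ) ≤ a)).1 h with h' | h'
    · exact (prt_spec hπ hapm).1 h'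
    · exact (prt_ne_neg hπ hapm) h'
  have hnlt : ¬(|prt π a| < a) := by
    intro h
    exact ha ((mem_Rfin_iff hπ).2 ⟨ha1, ha2, h⟩)
  have hgt : a < |prt π a| := by omega
  refine ⟨(mem_Rfin_iff hπ).2 ⟨by omega, ?_, ?_⟩, hgt⟩
  · have := (prt_mem hπ hapm)
    rw [mem_pm2] at this
    rcases abs_choice (prt π a) with h | h <;> omega
  · rw [abs_prt_prt hπ hapm, abs_of_pos (by omega)]
    exact hgt

lemma card_Rfin (hπ : P2sym n π) : (Rfin n π).card = n := by
  classical
  set Opp := (Finset.Icc 1 (2 * n : ℤ)).filter (fun a => a ∉ Rfin n π) with hOpp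
  have hcardeq : (Rfin n π).card = Opp.card := by
    apply Finset.card_bij' (i := fun b _ => |prt π b|) (j := fun a _ => |prt π a|)
    · intro b hb
      have h1 := abs_prt_lt hπ hb
      have h2 := abs_prt_pos hπ (pm_of_Rfin hπ hb)
      have h3 := (mem_Rfin_iff hπ).1 hb
      rw [hOpp, Finset.mem_filter, Finset.mem_Icc]
      exact ⟨⟨by omega, by omega⟩, abs_prt_not_mem_Rfin hπ hb⟩
    · intro a ha
      rw [hOpp, Finset.mem_filter, Finset.mem_Icc] at ha
      exact (mem_Rfin_abs_prt hπ ha.1.1 ha.1.2 ha.2).1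
    · intro b hb
      have hbpm := pm_of_Rfin hπ hb
      rw [abs_prt_prt hπ hbpm, abs_of_pos (by have := (mem_Rfin_iff hπ).1 hb; omega)]
    · intro a ha
      rw [hOpp, Finset.mem_filter, Finset.mem_Icc] at ha
      have hapm : a ∈ pmSet (2 * n) := mem_pm2.2 ⟨by omega, by omega, by omega⟩
      rw [abs_prt_prt hπ hapm, abs_of_pos (by omega)]
  have hsub : Rfin n π ⊆ Finset.Icc 1 (2 * n : ℤ) := by
    intro b hb
    have := (mem_Rfin_iff hπ).1 hb
    rw [Finset.mem_Icc]
    omega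
  have hfil : (Finset.Icc 1 (2 * n : ℤ)).filter (fun a => a ∈ Rfin n π) = Rfin n π := by
    ext b
    rw [Finset.mem_filter]
    exact ⟨fun h => h.2, fun h => ⟨hsub h, h⟩⟩
  have hsplit := Finset.card_filter_add_card_filter_not
    (s := Finset.Icc 1 (2 * n : ℤ)) (p := fun a => a ∈ Rfin n π)
  rw [hfil] at hsplit
  have hIcc : (Finset.Icc 1 (2 * n : ℤ)).card = 2 * n := by
    rw [Int.card_Icc]
    omega
  rw [hIcc] at hsplit
  have hOppc : Finset.filter (fun a => ¬(fun a => a ∈ Rfin n π) a) (Finset.Icc 1 (2 * (n : ℤ)))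
      = Opp := rfl
  rw [hOppc] at hsplit
  omega

lemma ballot_Rfin (hπ : P2sym n π) : Ballot n (Rfin n π) := by
  classical
  have hsub : Rfin n π ⊆ Finset.Icc 1 (2 * n : ℤ) := by
    intro b hb
    have := (mem_Rfin_iff hπ).1 hb
    rw [Finset.mem_Icc]
    omega
  refine ⟨hsub, card_Rfin hπ, ?_⟩
  intro k hk
  by_cases hk2 : k ≤ 2 * (n : ℤ)
  · -- injection argument on the prefix [1, k]
    set s := (Rfin n π).filter (fun x => x ≤ k) with hs
    set t := (Finset.Icc 1 k).filter (fun a => a ∉ Rfin n π) with ht'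
    have hcard : s.card ≤ t.card := by
      apply Finset.card_le_card_of_injOn (f := fun b => |prt π b|)
      · intro b hb
        rw [hs, Finset.mem_coe, Finset.mem_filter] at hb
        have h1 := abs_prt_lt hπ hb.1
        have h2 := abs_prt_pos hπ (pm_of_Rfin hπ hb.1)
        rw [ht', Finset.mem_coe, Finset.mem_filter, Finset.mem_Icc]
        beta_reduce
        exact ⟨⟨by omega, by omega⟩, abs_prt_not_mem_Rfin hπ hb.1⟩
      · intro b hb b' hb' heq
        rw [hs, Finset.coe_filter, Set.mem_setOf_eq] at hb hb'
        exact abs_prt_injOn hπ (pm_of_Rfin hπ hb.1) (pm_of_Rfin hπ hb'.1)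
          ((mem_Rfin_iff hπ).1 hb.1).1 ((mem_Rfin_iff hπ).1 hb'.1).1 heq
    have hst : s = (Finset.Icc 1 k).filter (fun a => a ∈ Rfin n π) := by
      ext b
      rw [hs, Finset.mem_filter, Finset.mem_filter, Finset.mem_Icc]
      constructor
      · rintro ⟨h1, h2⟩
        exact ⟨⟨((mem_Rfin_iff hπ).1 h1).1, h2⟩, h1⟩
      · rintro ⟨⟨h1, h2⟩, h3⟩
        exact ⟨h3, h2⟩
    have hsplit := Finset.card_filter_add_card_filter_not
      (s := Finset.Icc 1 k) (p := fun a => a ∈ Rfin n π)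
    have hIcc : (Finset.Icc 1 k).card = k.toNat := by
      rw [Int.card_Icc]
      omega
    rw [← hst, hIcc] at hsplit
    have htt : Finset.filter (fun a => ¬(fun a => a ∈ Rfin n π) a) (Finset.Icc 1 k) = t := rfl
    rw [htt] at hsplit
    rw [ht]
    have hss : (Rfin n π).filter (fun x => x ≤ k) = s := rfl
    rw [hss]
    omega
  · -- k beyond 2n: the whole of R is counted
    have hfull : (Rfin n π).filter (fun x => x ≤ k) = Rfin n π := by
      rw [Finset.filter_eq_self]
      intro x hx
      have := (mem_Rfin_iff hπ).1 hx
      omega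
    rw [ht, hfull, card_Rfin hπ]
    omega


/-! ### The hat partition -/

/-- The canonical noncrossing "hat" partition determined by a closer set `R`. -/
def hatSet (R : Finset ℤ) : Set (Set ℤ) :=
  {B | ∃ a b : ℤ, Matches R a b ∧ (B = {a, b} ∨ B = {-b, -a})}

lemma posRightLegs_eq_Rfin (hπ : P2sym n π) :
    posRightLegs π = {b : ℤ | b ∈ Rfin n π} := by
  ext b
  rw [Set.mem_setOf_eq, mem_Rfin_raw]
  constructor
  · intro h
    refine ⟨?_, h⟩
    obtain ⟨a, hab, hmem, hnab⟩ := h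
    have hbpm : b ∈ pmSet (2 * n) := block_subset hπ hmem (by simp)
    have hapm : a ∈ pmSet (2 * n) := block_subset hπ hmem (by simp)
    rw [mem_pm2] at hbpm hapm
    constructor <;> omega
  · exact fun h => h.2

lemma mem_negLeftLegs_iff (hπ : P2sym n π) {a : ℤ} :
    a ∈ negLeftLegs π ↔ -a ∈ posRightLegs π := by
  constructor
  · rintro ⟨b, hab, hmem, hnab⟩
    have hapm : a ∈ pmSet (2 * n) := block_subset hπ hmem (by simp)
    have hb : prt π a = b := prt_eq hπ (by omega) hmem
    have hne : prt π a ≠ -a := prt_ne_neg hπ hapm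
    rw [mem_posRightLegs_iff hπ (neg_mem_pmSet hapm), prt_neg hπ hapm, abs_neg]
    rw [abs_lt]
    omega
  · intro h
    have hapm : -a ∈ pmSet (2 * n) := block_subset hπ h.choose_spec.2.1 (by simp)
    have hapm' : a ∈ pmSet (2 * n) := by
      have := neg_mem_pmSet hapm; rwa [neg_neg] at this
    rw [mem_posRightLegs_iff hπ hapm, prt_neg hπ hapm', abs_neg, abs_lt] at h
    obtain ⟨hs, hmem⟩ := prt_spec hπ hapm'
    exact ⟨prt π a, by omega, hmem, by omega⟩

section HatSection

variable {R : Finset ℤ}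

lemma matches_pos {a b : ℤ} (h : Matches R a b) : 1 ≤ a ∧ 1 ≤ b :=
  ⟨h.1, by have := h.2.1; have := h.1; omega⟩

lemma hat_block_elem {B : Set ℤ} {x : ℤ} (hB : B ∈ hatSet R) (hx : x ∈ B) :
    ∃ a b, Matches R a b ∧
      ((B = {a, b} ∧ (x = a ∨ x = b) ∧ 0 < x) ∨ (B = {-b, -a} ∧ (x = -b ∨ x = -a) ∧ x < 0)) := by
  obtain ⟨a, b, hm, hBeq | hBeq⟩ := hB
  · refine ⟨a, b, hm, Or.inl ⟨hBeq, ?_, ?_⟩⟩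
    · rw [hBeq] at hx; simpa using hx
    · have := matches_pos hm
      rw [hBeq] at hx
      rcases (by simpa using hx : x = a ∨ x = b) with rfl | rfl <;> omega
  · refine ⟨a, b, hm, Or.inr ⟨hBeq, ?_, ?_⟩⟩
    · rw [hBeq] at hx; simpa using hx
    · have := matches_pos hm
      rw [hBeq] at hx
      rcases (by simpa using hx : x = -b ∨ x = -a) with rfl | rfl <;> omega

/-- Positive-element membership in hat blocks is rigid. -/
lemma hat_pos_elem_pair {a b a' b' x : ℤ} (h : Matches R a b) (h' : Matches R a' b')
    (hx : x = a ∨ x = b) (hx' : x = a' ∨ x = b') : a = a' ∧ b = b' := by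
  rcases hx with rfl | rfl <;> rcases hx' with h2 | h2
  · subst h2; exact ⟨rfl, matches_unique_right h h'⟩
  · exact absurd h'.2.2.1 (h2 ▸ h.not_mem)
  · exact absurd h.2.2.1 (h2.symm ▸ h'.not_mem)
  · subst h2; exact ⟨matches_unique_left h h', rfl⟩

lemma hat_block_unique {B B' : Set ℤ} {x : ℤ} (hB : B ∈ hatSet R) (hB' : B' ∈ hatSet R)
    (hx : x ∈ B) (hx' : x ∈ B') : B = B' := by
  obtain ⟨a, b, hm, hc⟩ := hat_block_elem hB hx
  obtain ⟨a', b', hm', hc'⟩ := hat_block_elem hB' hx'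
  rcases hc with ⟨hBeq, hxe, hxpos⟩ | ⟨hBeq, hxe, hxpos⟩ <;>
    rcases hc' with ⟨hBeq', hxe', hxpos'⟩ | ⟨hBeq', hxe', hxpos'⟩
  · obtain ⟨rfl, rfl⟩ := hat_pos_elem_pair hm hm' hxe hxe'
    rw [hBeq, hBeq']
  · omega
  · omega
  · have hxe2 : -x = a ∨ -x = b := by omega
    have hxe2' : -x = a' ∨ -x = b' := by omega
    obtain ⟨rfl, rfl⟩ := hat_pos_elem_pair hm hm' hxe2 hxe2'
    rw [hBeq, hBeq']

variable {n : ℕ}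

lemma hat_block_subset (hB : Ballot n R) {B : Set ℤ} (hBmem : B ∈ hatSet R) :
    B ⊆ pmSet (2 * n) := by
  intro x hx
  obtain ⟨a, b, hm, hc⟩ := hat_block_elem hBmem hx
  have h1 := matches_pos hm
  have h2 := hB.le_two_n hm.2.2.1
  have h3 := hm.2.1
  rcases hc with ⟨-, hxe, -⟩ | ⟨-, hxe, -⟩ <;> rw [mem_pm2] <;>
    refine ⟨by omega, by omega, by omega⟩

lemma hat_exists_block (hB : Ballot n R) {x : ℤ} (hx : x ∈ pmSet (2 * n)) :
    ∃ B ∈ hatSet R, x ∈ B := by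
  rw [mem_pm2] at hx
  rcases lt_or_gt_of_ne hx.1 with hneg | hpos
  · -- negative x : use the mirror of the block of -x
    by_cases hmem : -x ∈ R
    · obtain ⟨a, hm⟩ := hB.matches_of_mem hmem
      exact ⟨{-(-x), -a}, ⟨a, -x, hm, Or.inr rfl⟩, by simp⟩
    · obtain ⟨b, hm⟩ := hB.matches_of_opener (by omega) (by omega) hmem
      exact ⟨{-b, -(-x)}, ⟨-x, b, hm, Or.inr rfl⟩, by simp⟩
  · by_cases hmem : x ∈ R
    · obtain ⟨a, hm⟩ := hB.matches_of_mem hmem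
      exact ⟨{a, x}, ⟨a, x, hm, Or.inl rfl⟩, by simp⟩
    · obtain ⟨b, hm⟩ := hB.matches_of_opener (by omega) (by omega) hmem
      exact ⟨{x, b}, ⟨x, b, hm, Or.inl rfl⟩, by simp⟩

lemma hat_partition (hB : Ballot n R) : IsPartitionOn (pmSet (2 * n)) (hatSet R) := by
  constructor
  · intro B hBmem
    refine ⟨hat_block_subset hB hBmem, ?_⟩
    obtain ⟨a, b, hm, hc | hc⟩ := hBmem
    · rw [hc]; exact ⟨a, by simp⟩
    · rw [hc]; exact ⟨-b, by simp⟩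
  · intro x hx
    obtain ⟨B, hB1, hB2⟩ := hat_exists_block hB hx
    exact ⟨B, ⟨hB1, hB2⟩, fun C hC => hat_block_unique hC.1 hB1 hC.2 hB2⟩

lemma hat_pairs {B : Set ℤ} (hBmem : B ∈ hatSet R) : IsPairB B := by
  obtain ⟨a, b, hm, hc | hc⟩ := hBmem
  · exact ⟨a, b, by have := hm.2.1; omega, hc⟩
  · exact ⟨-b, -a, by have := hm.2.1; omega, hc⟩

lemma hat_two_elem {B : Set ℤ} {i k : ℤ} (hBmem : B ∈ hatSet R) (hik : i < k)
    (hi : i ∈ B) (hk : k ∈ B) :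
    Matches R i k ∨ Matches R (-k) (-i) := by
  obtain ⟨a, b, hm, hc⟩ := hat_block_elem hBmem hi
  rcases hc with ⟨hBeq, hie, hipos⟩ | ⟨hBeq, hie, hipos⟩
  · left
    rw [hBeq] at hk
    rcases (by simpa using hk : k = a ∨ k = b) with rfl | rfl
    · rcases hie with rfl | rfl
      · omega
      · have := hm.2.1; omega
    · rcases hie with rfl | rfl
      · exact hm
      · omega
  · right
    rw [hBeq] at hk
    rcases (by simpa using hk : k = -b ∨ k = -a) with rfl | rfl
    · rcases hie with rfl | rfl
      · omega
      · have := hm.2.1; omega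
    · rcases hie with rfl | rfl
      · simpa using hm
      · omega

lemma hat_noncrossing : NonCrossing (hatSet R) := by
  rintro ⟨i, j, k, l, B, C, hB, hC, hBC, hij, hjk, hkl, hiB, hkB, hjC, hlC⟩
  rcases hat_two_elem hB (by omega) hiB hkB with h1 | h1 <;>
    rcases hat_two_elem hC (by omega) hjC hlC with h2 | h2
  · exact matches_nocross h1 h2 hij hjk hkl
  · have := matches_pos h1
    have := matches_pos h2
    omega
  · have := matches_pos h1
    have := matches_pos h2
    omega
  · exact matches_nocross h2 h1 (by omega) (by omega) (by omega)

lemma hat_negSet {B : Set ℤ} (hBmem : B ∈ hatSet R) : negSet B ∈ hatSet R := by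
  obtain ⟨a, b, hm, hc | hc⟩ := hBmem
  · rw [hc, negSet_pair]
    exact ⟨a, b, hm, Or.inr (Set.pair_comm _ _)⟩
  · rw [hc, negSet_pair]
    simp only [neg_neg]
    exact ⟨a, b, hm, Or.inl (Set.pair_comm _ _)⟩

lemma hat_halves {B : Set ℤ} (hBmem : B ∈ hatSet R) :
    (∀ x ∈ B, 0 < x) ∨ (∀ x ∈ B, x < 0) := by
  obtain ⟨a, b, hm, hc | hc⟩ := hBmem <;> have h1 := matches_pos hm
  · left; intro x hx
    rw [hc] at hx
    rcases (by simpa using hx : x = a ∨ x = b) with rfl | rfl <;> omega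
  · right; intro x hx
    rw [hc] at hx
    rcases (by simpa using hx : x = -b ∨ x = -a) with rfl | rfl <;> omega

lemma hat_posRightLegs (hB : Ballot n R) : posRightLegs (hatSet R) = {b : ℤ | b ∈ R} := by
  ext x
  constructor
  · rintro ⟨a, hax, hmem, hnax⟩
    obtain ⟨a', b', hm, hc | hc⟩ := hmem
    · rw [pair_eq_pair_iff hax (by have := hm.2.1; omega)] at hc
      obtain ⟨rfl, rfl⟩ := hc
      exact hm.2.2.1
    · have h1 := matches_pos hm
      have h2 := hm.2.1
      rw [pair_eq_pair_iff hax (by omega)] at hc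
      omega
  · intro hx
    obtain ⟨a, hm⟩ := hB.matches_of_mem hx
    have := matches_pos hm
    exact ⟨a, hm.2.1, ⟨a, x, hm, Or.inl rfl⟩, by omega⟩

lemma hat_negLeftLegs (hB : Ballot n R) :
    negLeftLegs (hatSet R) = {a : ℤ | -a ∈ R} := by
  ext x
  constructor
  · rintro ⟨b, hxb, hmem, hnxb⟩
    obtain ⟨a', b', hm, hc | hc⟩ := hmem
    · have h1 := matches_pos hm
      have h2 := hm.2.1
      rw [pair_eq_pair_iff hxb (by omega)] at hc
      omega
    · have h2 := hm.2.1
      rw [pair_eq_pair_iff hxb (by omega)] at hc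
      obtain ⟨rfl, rfl⟩ := hc
      simpa using hm.2.2.1
  · intro hx
    obtain ⟨a, hm⟩ := hB.matches_of_mem hx
    have h1 := matches_pos hm
    have h2 := hm.2.1
    refine ⟨-a, by omega, ?_, by omega⟩
    have : ({x, -a} : Set ℤ) = {-(-x), -a} := by norm_num
    exact this ▸ ⟨a, -x, hm, Or.inr rfl⟩

lemma hat_noCoveredSingleton : NoCoveredSingleton (hatSet R) := by
  rintro ⟨a, b, c, -, -, -, hc⟩
  obtain ⟨a', b', hm, hc' | hc'⟩ := hc
  · have ha : a' ∈ ({c} : Set ℤ) := by rw [hc']; simp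
    have hb : b' ∈ ({c} : Set ℤ) := by rw [hc']; simp
    simp only [Set.mem_singleton_iff] at ha hb
    have h2 := hm.2.1
    omega
  · have ha : -b' ∈ ({c} : Set ℤ) := by rw [hc']; simp
    have hb : -a' ∈ ({c} : Set ℤ) := by rw [hc']; simp
    simp only [Set.mem_singleton_iff] at ha hb
    have h2 := hm.2.1
    omega

end HatSection

lemma hatProps_hatSet (hπ : P2sym n π) :
    HatProps (2 * n) π (hatSet (Rfin n π)) := by
  have hB := ballot_Rfin hπ
  refine ⟨hat_partition hB, fun B hB' => Or.inl (hat_pairs hB'), hat_noncrossing,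
    fun B hB' => hat_negSet hB', fun B hB' => hat_halves hB', ?_, ?_, hat_noCoveredSingleton⟩
  · rw [hat_posRightLegs hB, posRightLegs_eq_Rfin hπ]
  · rw [hat_negLeftLegs hB]
    ext a
    rw [Set.mem_setOf_eq, mem_negLeftLegs_iff hπ, posRightLegs_eq_Rfin hπ]
    rfl

/-! ### Uniqueness of the hat partition -/

lemma ht_diff (R : Finset ℤ) {a k : ℤ} (hak : a ≤ k) :
    ht R k = ht R a + (k - a) - 2 * ((R.filter (fun x => a < x ∧ x ≤ k)).card : ℤ) := by
  classical
  have hsplit := Finset.card_filter_add_card_filter_not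
    (s := R.filter (fun x => x ≤ k)) (p := fun x => x ≤ a)
  have h1 : (R.filter (fun x => x ≤ k)).filter (fun x => x ≤ a)
      = R.filter (fun x => x ≤ a) := by
    ext x
    simp only [Finset.mem_filter]
    constructor
    · rintro ⟨⟨hx, h2⟩, h3⟩; exact ⟨hx, h3⟩
    · rintro ⟨hx, h3⟩; exact ⟨⟨hx, by omega⟩, h3⟩
  have h2 : (R.filter (fun x => x ≤ k)).filter (fun x => ¬(fun x => x ≤ a) x)
      = R.filter (fun x => a < x ∧ x ≤ k) := by
    ext x
    simp only [Finset.mem_filter]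
    constructor
    · rintro ⟨⟨hx, h2⟩, h3⟩; exact ⟨hx, by omega, h2⟩
    · rintro ⟨hx, h3, h4⟩; exact ⟨⟨hx, h4⟩, by omega⟩
  rw [h1, h2] at hsplit
  simp only [ht]
  omega

section Uniq

variable {n : ℕ} {π ρ : Set (Set ℤ)}

lemma hp_block_unique (hρ : HatProps (2 * n) π ρ) {x : ℤ} {B C : Set ℤ}
    (hB : B ∈ ρ) (hC : C ∈ ρ) (hxB : x ∈ B) (hxC : x ∈ C) : B = C :=
  (hρ.1.2 x ((hρ.1.1 B hB).1 hxB)).unique ⟨hB, hxB⟩ ⟨hC, hxC⟩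

lemma hp_posRightLegs (hπ : P2sym n π) (hρ : HatProps (2 * n) π ρ) :
    posRightLegs ρ = {b : ℤ | b ∈ Rfin n π} := by
  rw [hρ.2.2.2.2.2.1, posRightLegs_eq_Rfin hπ]

/-- Key uniqueness step: any positive pair of a partition satisfying `HatProps`
is a matched pair of the canonical parenthesis matching. -/
lemma hp_pair_matches (hπ : P2sym n π) (hρ : HatProps (2 * n) π ρ) {a b : ℤ}
    (ha : 0 < a) (hab : a < b) (hmem : ({a, b} : Set ℤ) ∈ ρ) :
    Matches (Rfin n π) a b := by
  classical
  set R := Rfin n π with hR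
  have hRL := hp_posRightLegs hπ hρ
  have hbpm : b ∈ pmSet (2 * n) := (hρ.1.1 _ hmem).1 (by simp)
  have hb2n : b ≤ 2 * (n : ℤ) := (mem_pm2.1 hbpm).2.2
  have hbR : b ∈ R := by
    have : b ∈ posRightLegs ρ := ⟨a, hab, hmem, by omega⟩
    rwa [hRL] at this
  have haR : a ∉ R := by
    intro hmem'
    have : a ∈ posRightLegs ρ := by rw [hRL]; exact hmem'
    obtain ⟨w, hwa, hwmem, -⟩ := this
    have heq := hp_block_unique hρ hwmem hmem (by simp : a ∈ ({w, a} : Set ℤ)) (by simp)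
    have : w ∈ ({a, b} : Set ℤ) := heq ▸ (by simp)
    rcases (by simpa using this : w = a ∨ w = b) with rfl | rfl <;> omega
  -- every element strictly between a and b has its ρ-partner strictly between a and b
  have claim1 : ∀ x, a < x → x < b → ∃ y, y ≠ x ∧ a < y ∧ y < b ∧ ({x, y} : Set ℤ) ∈ ρ := by
    intro x hax hxb
    have hxpm : x ∈ pmSet (2 * n) := mem_pm2.2 ⟨by omega, by omega, by omega⟩
    obtain ⟨B, ⟨hBρ, hxB⟩, -⟩ := hρ.1.2 x hxpm
    rcases hρ.2.1 B hBρ with ⟨u, v, huv, hBeq⟩ | ⟨c, hBeq⟩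
    · -- B is a pair
      have hxuv : x = u ∨ x = v := by rw [hBeq] at hxB; simpa using hxB
      set y := if x = u then v else u with hy
      have hyne : y ≠ x := by
        rcases hxuv with rfl | rfl
        · simpa [hy] using fun h => huv h.symm
        · by_cases h : x = u
          · exact absurd h.symm huv
          · simpa [hy, h] using huv
      have hxyB : ({x, y} : Set ℤ) = B := by
        rw [hBeq]
        rcases hxuv with rfl | rfl
        · simp [hy]
        · by_cases h : x = u
          · rw [h]; simp [hy, h]
          · simp [hy, h, Set.pair_comm]
      have hxyρ : ({x, y} : Set ℤ) ∈ ρ := hxyB ▸ hBρ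
      have hBne : B ≠ ({a, b} : Set ℤ) := by
        intro h
        rw [h] at hxB
        rcases (by simpa using hxB : x = a ∨ x = b) with rfl | rfl <;> omega
      have hyB : y ∈ B := hxyB ▸ (by simp)
      have hya : y ≠ a := by
        rintro rfl
        have := hp_block_unique hρ hBρ hmem hyB (by simp)
        exact hBne this
      have hyb : y ≠ b := by
        rintro rfl
        have := hp_block_unique hρ hBρ hmem hyB (by simp)
        exact hBne this
      have hynlt : ¬(y < a) := by
        intro hlt
        exact hρ.2.2.1 ⟨y, a, x, b, B, {a, b}, hBρ, hmem, hBne, by omega, by omega, by omega,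
          hyB, hxB, by simp, by simp⟩
      have hyngt : ¬(b < y) := by
        intro hgt
        exact hρ.2.2.1 ⟨a, x, b, y, {a, b}, B, hmem, hBρ, fun h => hBne h.symm, by omega,
          by omega, by omega, by simp, by simp, hxB, hyB⟩
      exact ⟨y, hyne, by omega, by omega, hxyρ⟩
    · -- B is a singleton: covered singleton, contradiction
      exfalso
      have hcx : c = x := by
        rw [hBeq] at hxB; simpa using hxB.symm
      exact hρ.2.2.2.2.2.2.2 ⟨a, b, x, hax, hxb, hmem, by rw [← hcx, ← hBeq]; exact hBρ⟩
  -- the partner function inside the interval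
  set f : ℤ → ℤ := fun x =>
    if h : ∃ y, y ≠ x ∧ a < y ∧ y < b ∧ ({x, y} : Set ℤ) ∈ ρ then h.choose else 0 with hf
  have hfspec : ∀ x, a < x → x < b →
      f x ≠ x ∧ a < f x ∧ f x < b ∧ ({x, f x} : Set ℤ) ∈ ρ := by
    intro x hax hxb
    have h := claim1 x hax hxb
    simp only [hf, dif_pos h]
    exact h.choose_spec
  have hfmem : ∀ x, a < x → x < b → ({x, f x} : Set ℤ) ∈ ρ := fun x h1 h2 => (hfspec x h1 h2).2.2.2
  have hfuniq : ∀ x y, a < x → x < b → y ≠ x → ({x, y} : Set ℤ) ∈ ρ → y = f x := by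
    intro x y h1 h2 hyx hyρ
    have heq := hp_block_unique hρ hyρ (hfmem x h1 h2) (by simp : x ∈ ({x, y} : Set ℤ)) (by simp)
    have : y ∈ ({x, f x} : Set ℤ) := heq ▸ (by simp)
    rcases (by simpa using this : y = x ∨ y = f x) with rfl | h
    · exact absurd rfl hyx
    · exact h
  have hfinv : ∀ x, a < x → x < b → f (f x) = x := by
    intro x h1 h2
    obtain ⟨hne, h3, h4, h5⟩ := hfspec x h1 h2
    exact (hfuniq (f x) x h3 h4 (fun h => hne h.symm) (by rwa [Set.pair_comm])).symm
  have hclose : ∀ x, a < x → x < b → (x ∈ R ↔ f x < x) := by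
    intro x h1 h2
    constructor
    · intro hxR
      have : x ∈ posRightLegs ρ := by rw [hRL]; exact hxR
      obtain ⟨w, hwx, hwmem, -⟩ := this
      have := hfuniq x w h1 h2 (by omega) (by rwa [Set.pair_comm])
      omega
    · intro hlt
      obtain ⟨hne, h3, h4, h5⟩ := hfspec x h1 h2
      have : x ∈ posRightLegs ρ := ⟨f x, hlt, by rwa [Set.pair_comm], by omega⟩
      rwa [hRL] at this
  -- prefix counting: closers inside (a, k] inject into openers inside (a, k]
  have hcount : ∀ k, a ≤ k → k < b →
      (R.filter (fun x => a < x ∧ x ≤ k)).card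
        ≤ ((Finset.Ioc a k).filter (fun x => x ∉ R)).card := by
    intro k hk1 hk2
    apply Finset.card_le_card_of_injOn (f := f)
    · intro x hx
      rw [Finset.mem_coe, Finset.mem_filter] at hx
      obtain ⟨hxR, hax, hxk⟩ := hx
      have hflt : f x < x := (hclose x hax (by omega)).1 hxR
      obtain ⟨hne, h3, h4, h5⟩ := hfspec x hax (by omega)
      rw [Finset.mem_coe, Finset.mem_filter, Finset.mem_Ioc]
      refine ⟨⟨h3, by omega⟩, ?_⟩
      intro hfR
      have := (hclose (f x) h3 h4).1 hfR
      rw [hfinv x hax (by omega)] at this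
      omega
    · intro x hx x' hx' heq
      rw [Finset.coe_filter, Set.mem_setOf_eq] at hx hx'
      have e1 := hfinv x hx.2.1 (by omega)
      have e2 := hfinv x' hx'.2.1 (by omega)
      rw [heq] at e1
      rw [e1] at e2
      exact e2
  -- balance: as many closers as openers in the open interval (a, b)
  have hbal : 2 * ((R.filter (fun x => a < x ∧ x ≤ b - 1)).card : ℤ) = b - 1 - a := by
    have hcardeq : (R.filter (fun x => a < x ∧ x ≤ b - 1)).card
        = ((Finset.Ioc a (b - 1)).filter (fun x => x ∉ R)).card := by
      apply Finset.card_bij' (i := fun x _ => f x) (j := fun y _ => f y)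
      · intro x hx
        rw [Finset.mem_filter] at hx
        obtain ⟨hxR, hax, hxk⟩ := hx
        have hflt : f x < x := (hclose x hax (by omega)).1 hxR
        obtain ⟨hne, h3, h4, h5⟩ := hfspec x hax (by omega)
        rw [Finset.mem_filter, Finset.mem_Ioc]
        refine ⟨⟨h3, by omega⟩, ?_⟩
        intro hfR
        have := (hclose (f x) h3 h4).1 hfR
        rw [hfinv x hax (by omega)] at this
        omega
      · intro y hy
        rw [Finset.mem_filter, Finset.mem_Ioc] at hy
        obtain ⟨⟨hay, hyk⟩, hyR⟩ := hy
        obtain ⟨hne, h3, h4, h5⟩ := hfspec y hay (by omega)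
        have hngt : ¬(f y < y) := fun h => hyR ((hclose y hay (by omega)).2 h)
        have hfyR : f y ∈ R := by
          rw [hclose (f y) h3 h4, hfinv y hay (by omega)]
          omega
        rw [Finset.mem_filter]
        exact ⟨hfyR, h3, by omega⟩
      · intro x hx
        rw [Finset.mem_filter] at hx
        exact hfinv x hx.2.1 (by omega)
      · intro y hy
        rw [Finset.mem_filter, Finset.mem_Ioc] at hy
        exact hfinv y hy.1.1 (by omega)
    have hfsplit := Finset.card_filter_add_card_filter_not
      (s := Finset.Ioc a (b - 1)) (p := fun x => x ∈ R)
    have hfs1 : (Finset.Ioc a (b - 1)).filter (fun x => x ∈ R)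
        = R.filter (fun x => a < x ∧ x ≤ b - 1) := by
      ext x
      simp only [Finset.mem_filter, Finset.mem_Ioc]
      tauto
    have hfs2 : (Finset.Ioc a (b - 1)).filter (fun x => ¬(fun x => x ∈ R) x)
        = (Finset.Ioc a (b - 1)).filter (fun x => x ∉ R) := rfl
    rw [hfs1, hfs2] at hfsplit
    have hIoc : (Finset.Ioc a (b - 1)).card = (b - 1 - a).toNat := Int.card_Ioc a (b - 1)
    omega
  -- assemble `Matches`
  have hhta : ht R a = ht R (a - 1) + 1 := ht_step_not haR
  have hhtb : ht R b = ht R (b - 1) - 1 := ht_step_mem hbR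
  have hhtbal : ht R (b - 1) = ht R a := by
    have := ht_diff R (a := a) (k := b - 1) (by omega)
    omega
  refine ⟨by omega, hab, hbR, by omega, ?_⟩
  intro k hk1 hk2
  have hdiff := ht_diff R (a := a) (k := k) (by omega)
  have hc := hcount k hk1 hk2
  have hfsplit := Finset.card_filter_add_card_filter_not
    (s := Finset.Ioc a k) (p := fun x => x ∈ R)
  have hfs1 : (Finset.Ioc a k).filter (fun x => x ∈ R)
      = R.filter (fun x => a < x ∧ x ≤ k) := by
    ext x
    simp only [Finset.mem_filter, Finset.mem_Ioc]
    tauto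
  have hfs2 : (Finset.Ioc a k).filter (fun x => ¬(fun x => x ∈ R) x)
      = (Finset.Ioc a k).filter (fun x => x ∉ R) := rfl
  rw [hfs1, hfs2] at hfsplit
  have hIoc : (Finset.Ioc a k).card = (k - a).toNat := Int.card_Ioc a k
  omega

end Uniq

lemma negSet_singleton (c : ℤ) : negSet {c} = {-c} := by
  simp [negSet]

lemma hp_no_singleton (hπ : P2sym n π) (hρ : HatProps (2 * n) π ρ) {c : ℤ}
    (hc : ({c} : Set ℤ) ∈ ρ) : False := by
  have hB := ballot_Rfin hπ
  have hRL := hp_posRightLegs hπ hρ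
  -- reduce to a positive singleton
  have key : ∀ c : ℤ, 0 < c → ({c} : Set ℤ) ∈ ρ → False := by
    intro c hcpos hc
    have hcpm : c ∈ pmSet (2 * n) := (hρ.1.1 _ hc).1 (by simp)
    rw [mem_pm2] at hcpm
    by_cases hcR : c ∈ Rfin n π
    · have : c ∈ posRightLegs ρ := by rw [hRL]; exact hcR
      obtain ⟨w, hwc, hwmem, -⟩ := this
      have heq := hp_block_unique hρ hc hwmem (by simp) (by simp : c ∈ ({w, c} : Set ℤ))
      have : w ∈ ({c} : Set ℤ) := heq ▸ (by simp)
      simp only [Set.mem_singleton_iff] at this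
      omega
    · obtain ⟨b, hm⟩ := hB.matches_of_opener (by omega) (by omega) hcR
      have : b ∈ posRightLegs ρ := by rw [hRL]; exact hm.2.2.1
      obtain ⟨a', ha'b, hmem, -⟩ := this
      have hbpos : (0 : ℤ) < b := by have := matches_pos hm; omega
      have ha'pos : (0 : ℤ) < a' := by
        rcases hρ.2.2.2.2.1 _ hmem with h | h
        · exact h a' (by simp)
        · exact absurd (h b (by simp)) (by omega)
      have hm' := hp_pair_matches hπ hρ ha'pos ha'b hmem
      have : a' = c := matches_unique_left hm' hm
      subst this
      have heq := hp_block_unique hρ hc hmem (by simp) (by simp : a' ∈ ({a', b} : Set ℤ))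
      have : b ∈ ({a'} : Set ℤ) := heq ▸ (by simp)
      simp only [Set.mem_singleton_iff] at this
      have := hm.2.1
      omega
  have hcpm : c ∈ pmSet (2 * n) := (hρ.1.1 _ hc).1 (by simp)
  rw [mem_pm2] at hcpm
  rcases lt_or_gt_of_ne hcpm.1 with hneg | hpos
  · have hneg' : ({-c} : Set ℤ) ∈ ρ := by
      have := hρ.2.2.2.1 _ hc
      rwa [negSet_singleton] at this
    exact key (-c) (by omega) hneg'
  · exact key c hpos hc

lemma hp_eq_hatSet (hπ : P2sym n π) (hρ : HatProps (2 * n) π ρ) :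
    ρ = hatSet (Rfin n π) := by
  have hB := ballot_Rfin hπ
  have hRL := hp_posRightLegs hπ hρ
  ext B
  constructor
  · intro hBρ
    rcases hρ.2.1 B hBρ with ⟨u, v, huv, hBeq⟩ | ⟨c, hBeq⟩
    · subst hBeq
      -- order the pair
      rcases lt_or_gt_of_ne huv with huv' | huv'
      · rcases hρ.2.2.2.2.1 _ hBρ with h | h
        · have hupos : (0 : ℤ) < u := h u (by simp)
          exact ⟨u, v, hp_pair_matches hπ hρ hupos huv' hBρ, Or.inl rfl⟩
        · have hneg : ({-u, -v} : Set ℤ) ∈ ρ := by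
            have := hρ.2.2.2.1 _ hBρ
            rwa [negSet_pair] at this
          have hneg' : ({-v, -u} : Set ℤ) ∈ ρ := by rwa [Set.pair_comm] at hneg
          have hvneg : v < 0 := h v (by simp)
          have hm := hp_pair_matches hπ hρ (by omega) (by omega : -v < -u) hneg'
          exact ⟨-v, -u, hm, Or.inr (by norm_num)⟩
      · have hBeq' : ({u, v} : Set ℤ) = {v, u} := Set.pair_comm u v
        rw [hBeq']
        rw [hBeq'] at hBρ
        rcases hρ.2.2.2.2.1 _ hBρ with h | h
        · have hvpos : (0 : ℤ) < v := h v (by simp)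
          exact ⟨v, u, hp_pair_matches hπ hρ hvpos huv' hBρ, Or.inl rfl⟩
        · have hneg : ({-v, -u} : Set ℤ) ∈ ρ := by
            have := hρ.2.2.2.1 _ hBρ
            rwa [negSet_pair] at this
          have hneg' : ({-u, -v} : Set ℤ) ∈ ρ := by rwa [Set.pair_comm] at hneg
          have huneg : u < 0 := h u (by simp)
          have hm := hp_pair_matches hπ hρ (by omega) (by omega : -u < -v) hneg'
          exact ⟨-u, -v, hm, Or.inr (by norm_num)⟩
    · exact absurd (hBeq ▸ hBρ) (fun h => hp_no_singleton hπ hρ h)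
  · rintro ⟨a, b, hm, hBeq | hBeq⟩
    · subst hBeq
      have : b ∈ posRightLegs ρ := by rw [hRL]; exact hm.2.2.1
      obtain ⟨a', ha'b, hmem, -⟩ := this
      have hbpos : (0 : ℤ) < b := by have := matches_pos hm; omega
      have ha'pos : (0 : ℤ) < a' := by
        rcases hρ.2.2.2.2.1 _ hmem with h | h
        · exact h a' (by simp)
        · exact absurd (h b (by simp)) (by omega)
      have hm' := hp_pair_matches hπ hρ ha'pos ha'b hmem
      have : a' = a := matches_unique_left hm' hm
      subst this
      exact hmem
    · subst hBeq
      have : b ∈ posRightLegs ρ := by rw [hRL]; exact hm.2.2.1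
      obtain ⟨a', ha'b, hmem, -⟩ := this
      have hbpos : (0 : ℤ) < b := by have := matches_pos hm; omega
      have ha'pos : (0 : ℤ) < a' := by
        rcases hρ.2.2.2.2.1 _ hmem with h | h
        · exact h a' (by simp)
        · exact absurd (h b (by simp)) (by omega)
      have hm' := hp_pair_matches hπ hρ ha'pos ha'b hmem
      have : a' = a := matches_unique_left hm' hm
      subst this
      have := hρ.2.2.2.1 _ hmem
      rw [negSet_pair, Set.pair_comm] at this
      exact this

lemma hatOf_eq (hπ : P2sym n π) : hatOf (2 * n) π = hatSet (Rfin n π) := by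
  have hex : ∃ ρ, HatProps (2 * n) π ρ := ⟨_, hatProps_hatSet hπ⟩
  rw [hatOf, dif_pos hex]
  exact hp_eq_hatSet hπ hex.choose_spec

/-! ### Components (cycles) for good partitions -/

def GoodP (n : ℕ) (π : Set (Set ℤ)) : Prop :=
  ∀ b ∈ Rfin n π, Matches (Rfin n π) (|prt π b|) b

open Classical in
def Nfin (n : ℕ) (π : Set (Set ℤ)) : Finset ℤ :=
  (Rfin n π).filter (fun b => prt π b < 0)

lemma comp_subset {ρ : Set (Set ℤ)} {A : Set ℤ} (hA : A ∈ π) : compOf π ρ A ⊆ π := by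
  intro B hB
  simp only [compOf, Set.mem_setOf_eq] at hB
  induction hB with
  | refl => exact hA
  | @tail p q hp hpq ih => exact hpq.2.1

lemma compOf_eq {ρ : Set (Set ℤ)} {A : Set ℤ} {S : Set (Set ℤ)} (hA : A ∈ S)
    (hback : ∀ X ∈ S, Relation.ReflTransGen (connStep π ρ) A X)
    (hclosed : ∀ X ∈ S, ∀ Y, connStep π ρ X Y → Y ∈ S) :
    compOf π ρ A = S := by
  ext B
  constructor
  · intro hB
    simp only [compOf, Set.mem_setOf_eq] at hB
    induction hB with
    | refl => exact hA
    | @tail p q hp hpq ih => exact hclosed p ih q hpq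
  · exact fun hB => hback B hB

lemma pi_block_eq (hπ : P2sym n π) {Y : Set ℤ} {y : ℤ} (hY : Y ∈ π) (hyY : y ∈ Y) :
    Y = {y, prt π y} := by
  have hypm : y ∈ pmSet (2 * n) := block_subset hπ hY hyY
  exact block_unique hπ hY (prt_spec hπ hypm).2 hyY (by simp)

lemma Pb_mem (hπ : P2sym n π) {b : ℤ} (hbpm : b ∈ pmSet (2 * n)) :
    ({prt π b, b} : Set ℤ) ∈ π := by
  have := (prt_spec hπ hbpm).2
  rwa [Set.pair_comm] at this

lemma mPb_mem (hπ : P2sym n π) {b : ℤ} (hbpm : b ∈ pmSet (2 * n)) :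
    ({-prt π b, -b} : Set ℤ) ∈ π := by
  have := hπ.2.2.1 _ (Pb_mem hπ hbpm)
  rwa [negSet_pair] at this

lemma Cb_mem (hG : GoodP n π) {b : ℤ} (hb : b ∈ Rfin n π) :
    ({|prt π b|, b} : Set ℤ) ∈ hatSet (Rfin n π) :=
  ⟨_, _, hG b hb, Or.inl rfl⟩

lemma mCb_mem (hG : GoodP n π) {b : ℤ} (hb : b ∈ Rfin n π) :
    ({-b, -|prt π b|} : Set ℤ) ∈ hatSet (Rfin n π) :=
  ⟨_, _, hG b hb, Or.inr rfl⟩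

/-- Analysis of one connection step out of the pair (or mirror pair) of `b`. -/
lemma conn_step_analysis (hπ : P2sym n π) (hG : GoodP n π) {b : ℤ} (hb : b ∈ Rfin n π)
    {X Y : Set ℤ} (hX : X = ({prt π b, b} : Set ℤ) ∨ X = ({-prt π b, -b} : Set ℤ))
    (h : connStep π (hatSet (Rfin n π)) X Y) :
    Y = ({prt π b, b} : Set ℤ) ∨ Y = ({-prt π b, -b} : Set ℤ) := by
  obtain ⟨hXπ, hYπ, C, hC, ⟨x, hxX, hxC⟩, ⟨y, hyY, hyC⟩⟩ := h
  have hbpm : b ∈ pmSet (2 * n) := pm_of_Rfin hπ hb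
  have hppm : prt π b ∈ pmSet (2 * n) := prt_mem hπ hbpm
  have hprt2 : prt π (prt π b) = b := prt_prt hπ hbpm
  have hprtnb : prt π (-b) = -prt π b := prt_neg hπ hbpm
  have hprtnp : prt π (-prt π b) = -b := by
    have := prt_neg hπ hppm
    rwa [hprt2] at this
  -- determine the possible values of x
  have hxval : x = prt π b ∨ x = b ∨ x = -prt π b ∨ x = -b := by
    rcases hX with rfl | rfl
    · rcases (by simpa using hxX : x = prt π b ∨ x = b) with h' | h' <;> tauto
    · rcases (by simpa using hxX : x = -prt π b ∨ x = -b) with h' | h' <;> tauto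
  -- determine C
  have hCval : C = ({|prt π b|, b} : Set ℤ) ∨ C = ({-b, -|prt π b|} : Set ℤ) := by
    rcases hxval with rfl | rfl | rfl | rfl
    · rcases abs_choice (prt π b) with habs | habs
      · exact Or.inl (hat_block_unique hC (Cb_mem hG hb) hxC (by rw [habs]; simp))
      · exact Or.inr (hat_block_unique hC (mCb_mem hG hb) hxC (by rw [habs]; simp))
    · exact Or.inl (hat_block_unique hC (Cb_mem hG hb) hxC (by simp))
    · rcases abs_choice (prt π b) with habs | habs
      · exact Or.inr (hat_block_unique hC (mCb_mem hG hb) hxC (by rw [habs]; simp))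
      · exact Or.inl (hat_block_unique hC (Cb_mem hG hb) hxC (by rw [habs]; simp))
    · exact Or.inr (hat_block_unique hC (mCb_mem hG hb) hxC (by simp))
  -- determine the possible values of y, then Y
  have hYeq : Y = ({y, prt π y} : Set ℤ) := pi_block_eq hπ hYπ hyY
  have hyval : y = |prt π b| ∨ y = b ∨ y = -b ∨ y = -|prt π b| := by
    rcases hCval with rfl | rfl
    · rcases (by simpa using hyC : y = |prt π b| ∨ y = b) with h' | h' <;> tauto
    · rcases (by simpa using hyC : y = -b ∨ y = -|prt π b|) with h' | h' <;> tauto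
  rcases hyval with rfl | rfl | rfl | rfl
  · rcases abs_choice (prt π b) with habs | habs
    · rw [hYeq, habs, hprt2]
      exact Or.inl rfl
    · rw [hYeq, habs, hprtnp]
      exact Or.inr rfl
  · rw [hYeq]
    exact Or.inl (Set.pair_comm _ _)
  · rw [hYeq, hprtnb]
    exact Or.inr (by rw [Set.pair_comm])
  · rcases abs_choice (prt π b) with habs | habs
    · rw [hYeq, habs, hprtnp]
      exact Or.inr rfl
    · rw [hYeq, habs]
      simp only [neg_neg]
      rw [hprt2]
      exact Or.inl rfl

/-- In the positive case, single pairs are closed under connection. -/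
lemma conn_step_pos (hπ : P2sym n π) (hG : GoodP n π) {b : ℤ} (hb : b ∈ Rfin n π)
    (hpos : 0 < prt π b)
    {X Y : Set ℤ} (hX : X = ({prt π b, b} : Set ℤ) ∨ X = ({-prt π b, -b} : Set ℤ))
    (h : connStep π (hatSet (Rfin n π)) X Y) : Y = X := by
  obtain ⟨hXπ, hYπ, C, hC, ⟨x, hxX, hxC⟩, ⟨y, hyY, hyC⟩⟩ := h
  have hbpm : b ∈ pmSet (2 * n) := pm_of_Rfin hπ hb
  have hppm : prt π b ∈ pmSet (2 * n) := prt_mem hπ hbpm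
  have hprt2 : prt π (prt π b) = b := prt_prt hπ hbpm
  have hprtnb : prt π (-b) = -prt π b := prt_neg hπ hbpm
  have hprtnp : prt π (-prt π b) = -b := by
    have := prt_neg hπ hppm
    rwa [hprt2] at this
  have habs : |prt π b| = prt π b := abs_of_pos hpos
  have hYeq : Y = ({y, prt π y} : Set ℤ) := pi_block_eq hπ hYπ hyY
  rcases hX with rfl | rfl
  · -- X is the positive pair; C must be {prt b, b}
    have hCeq : C = ({prt π b, b} : Set ℤ) := by
      have hXC := hat_block_unique hC (Cb_mem hG hb) hxC ?_
      · rwa [habs] at hXC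
      · rw [habs]
        exact hxX
    rw [hCeq] at hyC
    rcases (by simpa using hyC : y = prt π b ∨ y = b) with rfl | rfl
    · rw [hYeq, hprt2]
    · rw [hYeq]
      exact Set.pair_comm _ _
  · have hCeq : C = ({-b, -|prt π b|} : Set ℤ) := by
      apply hat_block_unique hC (mCb_mem hG hb) hxC
      rw [habs]
      rcases (by simpa using hxX : x = -prt π b ∨ x = -b) with rfl | rfl <;> simp
    rw [hCeq, habs] at hyC
    rcases (by simpa using hyC : y = -b ∨ y = -prt π b) with rfl | rfl
    · rw [hYeq, hprtnb]
      exact Set.pair_comm _ _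
    · rw [hYeq, hprtnp]

lemma compOf_pos (hπ : P2sym n π) (hG : GoodP n π) {b : ℤ} (hb : b ∈ Rfin n π)
    (hpos : 0 < prt π b)
    {X : Set ℤ} (hX : X = ({prt π b, b} : Set ℤ) ∨ X = ({-prt π b, -b} : Set ℤ)) :
    compOf π (hatSet (Rfin n π)) X = {X} := by
  apply compOf_eq (S := ({X} : Set (Set ℤ))) (Set.mem_singleton X)
  · rintro Z rfl
    exact Relation.ReflTransGen.refl
  · rintro Z rfl Y hY
    exact conn_step_pos hπ hG hb hpos hX hY

lemma compOf_neg (hπ : P2sym n π) (hG : GoodP n π) {b : ℤ} (hb : b ∈ Rfin n π)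
    (hneg : prt π b < 0)
    {X : Set ℤ} (hX : X = ({prt π b, b} : Set ℤ) ∨ X = ({-prt π b, -b} : Set ℤ)) :
    compOf π (hatSet (Rfin n π)) X
      = {({prt π b, b} : Set ℤ), ({-prt π b, -b} : Set ℤ)} := by
  have hbpm : b ∈ pmSet (2 * n) := pm_of_Rfin hπ hb
  have habs : |prt π b| = -prt π b := abs_of_neg hneg
  have hb1 : (1 : ℤ) ≤ b := ((mem_Rfin_iff hπ).1 hb).1
  have hstep : connStep π (hatSet (Rfin n π)) ({prt π b, b} : Set ℤ) ({-prt π b, -b} : Set ℤ) := by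
    refine ⟨Pb_mem hπ hbpm, mPb_mem hπ hbpm, {|prt π b|, b}, Cb_mem hG hb, ⟨b, by simp, by simp⟩,
      ⟨-prt π b, by simp, by rw [habs]; simp⟩⟩
  have hstep' : connStep π (hatSet (Rfin n π)) ({-prt π b, -b} : Set ℤ) ({prt π b, b} : Set ℤ) := by
    refine ⟨mPb_mem hπ hbpm, Pb_mem hπ hbpm, {|prt π b|, b}, Cb_mem hG hb,
      ⟨-prt π b, by simp, by rw [habs]; simp⟩, ⟨b, by simp, by simp⟩⟩
  apply compOf_eq
  · rcases hX with rfl | rfl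
    · exact Set.mem_insert _ _
    · exact Set.mem_insert_of_mem _ rfl
  · intro Z hZ
    rcases hX with rfl | rfl <;> rcases (by simpa using hZ :
        Z = ({prt π b, b} : Set ℤ) ∨ Z = ({-prt π b, -b} : Set ℤ)) with rfl | rfl
    · exact Relation.ReflTransGen.refl
    · exact Relation.ReflTransGen.single hstep
    · exact Relation.ReflTransGen.single hstep'
    · exact Relation.ReflTransGen.refl
  · intro Z hZ Y hY
    have hZ' : Z = ({prt π b, b} : Set ℤ) ∨ Z = ({-prt π b, -b} : Set ℤ) := by simpa using hZ
    have := conn_step_analysis hπ hG hb hZ' hY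
    simpa using this

lemma negSet_union (A B : Set ℤ) : negSet (A ∪ B) = negSet A ∪ negSet B :=
  Set.image_union _ _ _

lemma negComp_pair (hπ : P2sym n π) {b : ℤ} (hbpm : b ∈ pmSet (2 * n)) :
    NegComp ({({prt π b, b} : Set ℤ), ({-prt π b, -b} : Set ℤ)} : Set (Set ℤ)) := by
  rw [NegComp, Set.sUnion_pair, negSet_union, negSet_pair, negSet_pair]
  simp only [neg_neg]
  rw [Set.union_comm]

lemma not_negComp_single (hπ : P2sym n π) {b : ℤ} (hbpm : b ∈ pmSet (2 * n))
    {X : Set ℤ} (hX : X = ({prt π b, b} : Set ℤ) ∨ X = ({-prt π b, -b} : Set ℤ))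
    (hpos : 0 < prt π b) (hb1 : 0 < b) : ¬NegComp ({X} : Set (Set ℤ)) := by
  intro hneg
  rw [NegComp, Set.sUnion_singleton] at hneg
  rcases hX with rfl | rfl
  · rw [negSet_pair] at hneg
    have : -b ∈ ({prt π b, b} : Set ℤ) := by
      rw [← hneg]; simp
    rcases (by simpa using this : -b = prt π b ∨ -b = b) with h | h <;> omega
  · rw [negSet_pair] at hneg
    simp only [neg_neg] at hneg
    have : b ∈ ({-prt π b, -b} : Set ℤ) := by
      rw [← hneg]; simp
    rcases (by simpa using this : b = -prt π b ∨ b = -b) with h | h <;> omega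

lemma pi_block_classify (hπ : P2sym n π) {B : Set ℤ} (hB : B ∈ π) :
    ∃ b ∈ Rfin n π, B = ({prt π b, b} : Set ℤ) ∨ B = ({-prt π b, -b} : Set ℤ) := by
  obtain ⟨u, v, huv, hBeq⟩ := hπ.2.1 B hB
  subst hBeq
  have hupm : u ∈ pmSet (2 * n) := block_subset hπ hB (by simp)
  have hvpm : v ∈ pmSet (2 * n) := block_subset hπ hB (by simp)
  -- orient the pair: x < y, {x, y} = B
  have main : ∀ x y : ℤ, x < y → x ∈ pmSet (2 * n) → y ∈ pmSet (2 * n) →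
      ({x, y} : Set ℤ) ∈ π →
      ∃ b ∈ Rfin n π, ({x, y} : Set ℤ) = ({prt π b, b} : Set ℤ)
        ∨ ({x, y} : Set ℤ) = ({-prt π b, -b} : Set ℤ) := by
    intro x y hxy hxpm hypm hmem
    have hprty : prt π y = x := prt_eq hπ (by omega) (by rwa [Set.pair_comm])
    have hprtx : prt π x = y := by
      have := prt_prt hπ hypm
      rwa [hprty] at this
    have hxne : x ≠ 0 := (mem_pm2.1 hxpm).1
    have hyne : y ≠ 0 := (mem_pm2.1 hypm).1
    have habsne : |x| ≠ y := by
      intro h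
      rcases abs_choice x with h' | h'
      · omega
      · have : x = -y := by omega
        exact (prt_ne_neg hπ hypm) (by rw [hprty, this])
    rcases lt_or_gt_of_ne habsne with hlt | hgt
    · -- y is a right leg
      refine ⟨y, (mem_Rfin_iff hπ).2 ⟨?_, (mem_pm2.1 hypm).2.2, by rwa [hprty]⟩, ?_⟩
      · have : 1 ≤ |x| := Int.one_le_abs hxne
        omega
      · rw [hprty]
        exact Or.inl rfl
    · -- -x is a right leg
      have hxneg : x < 0 := by
        rcases abs_choice x with h' | h' <;> omega
      have hnxpm : -x ∈ pmSet (2 * n) := neg_mem_pmSet hxpm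
      have hprtnx : prt π (-x) = -y := by
        rw [prt_neg hπ hxpm, hprtx]
      have habsx : |x| = -x := abs_of_neg hxneg
      refine ⟨-x, (mem_Rfin_iff hπ).2 ⟨by omega, (mem_pm2.1 hnxpm).2.2, ?_⟩, ?_⟩
      · rw [hprtnx, abs_neg]
        rcases abs_choice y with h' | h' <;> omega
      · rw [hprtnx]
        simp only [neg_neg]
        exact Or.inr (Set.pair_comm _ _)
  rcases lt_or_gt_of_ne huv with h | h
  · exact main u v h hupm hvpm hB
  · have hB' : ({v, u} : Set ℤ) ∈ π := by rwa [Set.pair_comm] at hB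
    obtain ⟨b, hb, hc⟩ := main v u h hvpm hupm hB'
    exact ⟨b, hb, by rwa [Set.pair_comm]⟩

lemma abs_prt_not_mem_of_good (hG : GoodP n π) {b : ℤ} (hb : b ∈ Rfin n π) :
    |prt π b| ∉ Rfin n π := (hG b hb).not_mem

lemma negcomps_eq (hπ : P2sym n π) (hG : GoodP n π) :
    {K ∈ CompsOf π (hatSet (Rfin n π)) | NegComp K}
      = (fun b => ({({prt π b, b} : Set ℤ), ({-prt π b, -b} : Set ℤ)} : Set (Set ℤ)))
          '' ↑(Nfin n π) := by
  ext K
  constructor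
  · rintro ⟨⟨A, hA, rfl⟩, hneg⟩
    obtain ⟨b, hb, hc⟩ := pi_block_classify hπ hA
    have hbpm : b ∈ pmSet (2 * n) := pm_of_Rfin hπ hb
    have hb1 : (0 : ℤ) < b := by have := (mem_Rfin_iff hπ).1 hb; omega
    rcases lt_or_gt_of_ne (prt_ne_zero hπ hbpm) with hsign | hsign
    · refine ⟨b, ?_, ?_⟩
      · simp only [Finset.coe_filter, Nfin, Set.mem_setOf_eq]
        exact ⟨hb, hsign⟩
      · rw [compOf_neg hπ hG hb hsign hc]
    · exfalso
      rw [compOf_pos hπ hG hb hsign hc] at hneg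
      exact not_negComp_single hπ hbpm hc hsign hb1 hneg
  · rintro ⟨b, hbN, rfl⟩
    simp only [Finset.coe_filter, Nfin, Set.mem_setOf_eq] at hbN
    obtain ⟨hb, hsign⟩ := hbN
    have hbpm : b ∈ pmSet (2 * n) := pm_of_Rfin hπ hb
    refine ⟨⟨{prt π b, b}, Pb_mem hπ hbpm, ?_⟩, negComp_pair hπ hbpm⟩
    rw [compOf_neg hπ hG hb hsign (Or.inl rfl)]

lemma Pb_ne_mPb (hπ : P2sym n π) (hG : GoodP n π) {b : ℤ} (hb : b ∈ Rfin n π) :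
    ({prt π b, b} : Set ℤ) ≠ ({-prt π b, -b} : Set ℤ) := by
  intro h
  have hb1 : (1 : ℤ) ≤ b := ((mem_Rfin_iff hπ).1 hb).1
  have : b ∈ ({-prt π b, -b} : Set ℤ) := h ▸ (by simp)
  rcases (by simpa using this : b = -prt π b ∨ b = -b) with h' | h'
  · -- b = |prt b| in the negative case, or -prt b < 0 in positive case
    rcases abs_choice (prt π b) with habs | habs
    · have h0 := abs_nonneg (prt π b)
      omega
    · have := abs_prt_not_mem_of_good hG hb
      rw [habs, ← h'] at this
      exact this hb
  · omega

lemma cNeg_eq_card_Nfin (hπ : P2sym n π) (hG : GoodP n π) :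
    cNeg n π = (Nfin n π).card := by
  rw [cNeg, hatOf_eq hπ, negcomps_eq hπ hG]
  rw [Set.ncard_image_of_injOn, Set.ncard_coe_finset]
  intro b hbN b' hbN' heq
  simp only [Finset.coe_filter, Nfin, Set.mem_setOf_eq] at hbN hbN'
  obtain ⟨hb, hsign⟩ := hbN
  obtain ⟨hb', hsign'⟩ := hbN'
  have hb1 : (1 : ℤ) ≤ b := ((mem_Rfin_iff hπ).1 hb).1
  have hb1' : (1 : ℤ) ≤ b' := ((mem_Rfin_iff hπ).1 hb').1
  have heq2 : ({({prt π b, b} : Set ℤ), ({-prt π b, -b} : Set ℤ)} : Set (Set ℤ))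
      = ({({prt π b', b'} : Set ℤ), ({-prt π b', -b'} : Set ℤ)} : Set (Set ℤ)) := heq
  have hPb : ({prt π b, b} : Set ℤ) ∈
      ({({prt π b', b'} : Set ℤ), ({-prt π b', -b'} : Set ℤ)} : Set (Set ℤ)) := by
    rw [← heq2]; simp
  rcases (by simpa using hPb :
      ({prt π b, b} : Set ℤ) = ({prt π b', b'} : Set ℤ)
        ∨ ({prt π b, b} : Set ℤ) = ({-prt π b', -b'} : Set ℤ)) with h | h
  · have : b ∈ ({prt π b', b'} : Set ℤ) := h ▸ (by simp)
    rcases (by simpa using this : b = prt π b' ∨ b = b') with h' | h' <;> omega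
  · have : b ∈ ({-prt π b', -b'} : Set ℤ) := h ▸ (by simp)
    rcases (by simpa using this : b = -prt π b' ∨ b = -b') with h' | h'
    · exfalso
      have habs : |prt π b'| = -prt π b' := abs_of_neg hsign'
      have := abs_prt_not_mem_of_good hG hb'
      rw [habs, ← h'] at this
      exact this hb
    · omega

lemma alo_of_good (hπ : P2sym n π) (hG : GoodP n π) : AllCyclesLengthOne n π := by
  intro K hK
  rw [hatOf_eq hπ] at hK
  obtain ⟨A, hA, rfl⟩ := hK
  obtain ⟨b, hb, hc⟩ := pi_block_classify hπ hA
  have hbpm : b ∈ pmSet (2 * n) := pm_of_Rfin hπ hb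
  have hb1 : (0 : ℤ) < b := by have := (mem_Rfin_iff hπ).1 hb; omega
  rcases lt_or_gt_of_ne (prt_ne_zero hπ hbpm) with hsign | hsign
  · rw [compOf_neg hπ hG hb hsign hc]
    constructor
    · intro
      exact Set.ncard_pair (Pb_ne_mPb hπ hG hb)
    · intro hnneg
      exact absurd (negComp_pair hπ hbpm) hnneg
  · rw [compOf_pos hπ hG hb hsign hc]
    constructor
    · intro hneg
      exact absurd hneg (not_negComp_single hπ hbpm hc hsign hb1)
    · intro
      exact Set.ncard_singleton _

lemma good_of_alo (hπ : P2sym n π) (hALO : AllCyclesLengthOne n π) : GoodP n π := by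
  intro b hb
  have hB := ballot_Rfin hπ
  obtain ⟨a, hm⟩ := hB.matches_of_mem hb
  have hbpm : b ∈ pmSet (2 * n) := pm_of_Rfin hπ hb
  have hppm : prt π b ∈ pmSet (2 * n) := prt_mem hπ hbpm
  have ha1 : (1 : ℤ) ≤ a := hm.1
  have hab : a < b := hm.2.1
  have hapm : a ∈ pmSet (2 * n) := by
    rw [mem_pm2]
    have := hB.le_two_n hb
    refine ⟨by omega, by omega, by omega⟩
  have hPb : ({prt π b, b} : Set ℤ) ∈ π := Pb_mem hπ hbpm
  have hQa : ({a, prt π a} : Set ℤ) ∈ π := (prt_spec hπ hapm).2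
  have hC : ({a, b} : Set ℤ) ∈ hatSet (Rfin n π) := ⟨a, b, hm, Or.inl rfl⟩
  have hstep : connStep π (hatSet (Rfin n π)) ({prt π b, b} : Set ℤ) ({a, prt π a} : Set ℤ) :=
    ⟨hPb, hQa, {a, b}, hC, ⟨b, by simp, by simp⟩, ⟨a, by simp, by simp⟩⟩
  set K := compOf π (hatSet (Rfin n π)) ({prt π b, b} : Set ℤ) with hKdef
  have hKmem : K ∈ CompsOf π (hatOf (2 * n) π) := by
    rw [hatOf_eq hπ]
    exact ⟨_, hPb, rfl⟩
  have hPbK : ({prt π b, b} : Set ℤ) ∈ K := Relation.ReflTransGen.refl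
  have hQaK : ({a, prt π a} : Set ℤ) ∈ K := Relation.ReflTransGen.single hstep
  have hfin : a = prt π b ∨ a = -prt π b := by
    by_cases hneg : NegComp K
    · -- K = {Pb, mPb}
      have h2 : K.ncard = 2 := (hALO K hKmem).1 hneg
      obtain ⟨X, Y, hXY, hKeq⟩ := Set.ncard_eq_two.1 h2
      -- -b is in the support of K
      have hbsupp : b ∈ ⋃₀ K := ⟨_, hPbK, by simp⟩
      have hnbsupp : -b ∈ ⋃₀ K := by
        rw [NegComp] at hneg
        rw [← hneg, mem_negSet, neg_neg]
        exact hbsupp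
      obtain ⟨Z, hZK, hbZ⟩ := hnbsupp
      have hZπ : Z ∈ π := comp_subset hPb hZK
      have hZeq : Z = ({-b, prt π (-b)} : Set ℤ) := pi_block_eq hπ hZπ hbZ
      rw [prt_neg hπ hbpm] at hZeq
      have hZne : Z ≠ ({prt π b, b} : Set ℤ) := by
        rw [hZeq]
        intro h
        have : -b ∈ ({prt π b, b} : Set ℤ) := h ▸ (by simp)
        rcases (by simpa using this : -b = prt π b ∨ -b = b) with h' | h'
        · exact (prt_ne_neg hπ hbpm) h'.symm
        · have := (mem_pm2.1 hbpm).1; omega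
      -- K = {Pb, Z}
      have hKPZ : K = {({prt π b, b} : Set ℤ), Z} := by
        rw [hKeq]
        rw [hKeq] at hPbK hZK
        rcases (by simpa using hPbK : ({prt π b, b} : Set ℤ) = X
            ∨ ({prt π b, b} : Set ℤ) = Y) with h1 | h1 <;>
          rcases (by simpa using hZK : Z = X ∨ Z = Y) with h2 | h2
        · exact absurd (h2.trans h1.symm) hZne
        · rw [← h1, ← h2]
        · rw [← h1, ← h2, Set.pair_comm]
        · exact absurd (h2.trans h1.symm) hZne
      rw [hKPZ] at hQaK
      rcases (by simpa using hQaK : ({a, prt π a} : Set ℤ) = ({prt π b, b} : Set ℤ)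
          ∨ ({a, prt π a} : Set ℤ) = Z) with h1 | h1
      · have : a ∈ ({prt π b, b} : Set ℤ) := h1 ▸ (by simp)
        rcases (by simpa using this : a = prt π b ∨ a = b) with h' | h' <;> [exact Or.inl h'; omega]
      · rw [hZeq] at h1
        have : a ∈ ({-b, -prt π b} : Set ℤ) := h1 ▸ (by simp)
        rcases (by simpa using this : a = -b ∨ a = -prt π b) with h' | h' <;>
          [omega; exact Or.inr h']
    · have h1 : K.ncard = 1 := (hALO K hKmem).2 hneg
      obtain ⟨X, hKeq⟩ := Set.ncard_eq_one.1 h1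
      rw [hKeq] at hPbK hQaK
      have heq : ({a, prt π a} : Set ℤ) = ({prt π b, b} : Set ℤ) := by
        rw [(by simpa using hQaK : ({a, prt π a} : Set ℤ) = X),
          (by simpa using hPbK : ({prt π b, b} : Set ℤ) = X)]
      have : a ∈ ({prt π b, b} : Set ℤ) := heq ▸ (by simp)
      rcases (by simpa using this : a = prt π b ∨ a = b) with h' | h' <;> [exact Or.inl h'; omega]
  rcases hfin with h | h
  · rwa [← h, abs_of_pos (by omega)]
  · have : |prt π b| = a := by
      have : prt π b = -a := by omega
      rw [this, abs_neg, abs_of_pos (by omega)]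
    rwa [this]

/-! ### The decoding map: a ballot set plus signs gives a good symmetric pair partition -/

open Classical in
/-- Negate openers whose matching closer carries a minus sign. -/
def flip (R N : Finset ℤ) (x : ℤ) : ℤ :=
  if ∃ b ∈ N, Matches R (|x|) b then -x else x

def decode (R N : Finset ℤ) : Set (Set ℤ) :=
  (fun B => flip R N '' B) '' hatSet R

section DecodeSection

variable {n : ℕ} {R N : Finset ℤ}

lemma flip_abs (x : ℤ) : |flip R N x| = |x| := by
  rw [flip]
  split <;> simp

lemma flip_neg (x : ℤ) : flip R N (-x) = -flip R N x := by
  rw [flip, flip, abs_neg]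
  split <;> ring

lemma flip_invol : Function.Involutive (flip R N) := by
  intro x
  by_cases h : ∃ b ∈ N, Matches R (|x|) b
  · have h1 : flip R N x = -x := if_pos h
    have h2 : flip R N (-x) = -(-x) := by rw [flip, abs_neg, if_pos h]
    rw [h1, h2, neg_neg]
  · have h1 : flip R N x = x := if_neg h
    rw [h1, h1]

lemma flip_ne_zero {x : ℤ} (hx : x ≠ 0) : flip R N x ≠ 0 := by
  rw [flip]; split <;> simpa

lemma flip_closer {b : ℤ} (hb : b ∈ R) (hbpos : 0 < b) : flip R N b = b := by
  rw [flip, if_neg]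
  rintro ⟨b', hb', hm⟩
  rw [abs_of_pos hbpos] at hm
  exact hm.not_mem hb

lemma flip_opener_mem {a b : ℤ} (hm : Matches R a b) (hbN : b ∈ N) : flip R N a = -a := by
  rw [flip, if_pos]
  exact ⟨b, hbN, by rwa [abs_of_pos (by have := hm.1; omega)]⟩

lemma flip_opener_not_mem {a b : ℤ} (hm : Matches R a b) (hbN : b ∉ N) : flip R N a = a := by
  rw [flip, if_neg]
  rintro ⟨b', hb', hm'⟩
  rw [abs_of_pos (by have := hm.1; omega)] at hm'
  exact hbN ((matches_unique_right hm hm') ▸ hb')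

lemma flip_pm {m : ℕ} {x : ℤ} : x ∈ pmSet m ↔ flip R N x ∈ pmSet m := by
  rw [mem_pmSet, mem_pmSet, flip_abs]
  constructor
  · rintro ⟨h1, h2⟩
    exact ⟨flip_ne_zero h1, h2⟩
  · rintro ⟨h1, h2⟩
    refine ⟨fun h => h1 ?_, h2⟩
    rw [h, flip]
    split <;> simp

/-- Transfer of the partition property along an involution. -/
lemma isPartitionOn_image {S : Set ℤ} {σ : Set (Set ℤ)} (f : ℤ → ℤ)
    (hf : Function.Involutive f) (hS : ∀ x, x ∈ S ↔ f x ∈ S) (h : IsPartitionOn S σ) :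
    IsPartitionOn S ((fun B => f '' B) '' σ) := by
  constructor
  · rintro B ⟨C, hC, rfl⟩
    obtain ⟨hsub, hne⟩ := h.1 C hC
    refine ⟨?_, hne.image f⟩
    rintro x ⟨y, hy, rfl⟩
    rw [← hS]
    exact hsub hy
  · intro x hx
    have hfx : f x ∈ S := (hS x).1 hx
    obtain ⟨B, ⟨hBσ, hfxB⟩, huniq⟩ := h.2 (f x) hfx
    refine ⟨f '' B, ⟨⟨B, hBσ, rfl⟩, ⟨f x, hfxB, hf x⟩⟩, ?_⟩
    rintro C ⟨⟨C', hC'σ, rfl⟩, hxC⟩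
    obtain ⟨y, hyC', hyx⟩ := hxC
    have : f x ∈ C' := by
      have : f x = y := by rw [← hyx, hf y]
      rwa [this]
    rw [huniq C' ⟨hC'σ, this⟩]

lemma negSet_image (f : ℤ → ℤ) (hodd : ∀ x, f (-x) = -f x) (B : Set ℤ) :
    negSet (f '' B) = f '' negSet B := by
  ext x
  rw [mem_negSet]
  constructor
  · rintro ⟨y, hy, hyx⟩
    refine ⟨-y, ?_, ?_⟩
    · rw [mem_negSet, neg_neg]; exact hy
    · rw [hodd, hyx, neg_neg]
  · rintro ⟨y, hy, rfl⟩
    rw [mem_negSet] at hy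
    exact ⟨-y, hy, by rw [hodd]⟩

lemma hat_not_selfneg {B : Set ℤ} (hB : B ∈ hatSet R) : negSet B ≠ B := by
  obtain ⟨a, b, hm, hc | hc⟩ := hB <;> have hp := matches_pos hm <;> subst hc <;>
      rw [negSet_pair] <;> intro h
  · have : -a ∈ ({a, b} : Set ℤ) := h ▸ (by simp)
    rcases (by simpa using this : -a = a ∨ -a = b) with h' | h' <;> omega
  · simp only [neg_neg] at h
    have : b ∈ ({-b, -a} : Set ℤ) := h.symm ▸ (by simp : b ∈ ({b, a} : Set ℤ))
    rcases (by simpa using this : b = -b ∨ b = -a) with h' | h' <;> omega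

lemma P2sym_decode (hB : Ballot n R) : P2sym n (decode R N) := by
  refine ⟨?_, ?_, ?_, ?_⟩
  · exact isPartitionOn_image _ flip_invol (fun x => flip_pm) (hat_partition hB)
  · rintro B ⟨C, hC, rfl⟩
    obtain ⟨a, b, hab, rfl⟩ := hat_pairs hC
    simp only
    rw [Set.image_pair]
    exact ⟨_, _, fun h => hab (flip_invol.injective h), rfl⟩
  · rintro B ⟨C, hC, rfl⟩
    rw [negSet_image _ flip_neg]
    exact ⟨negSet C, hat_negSet hC, rfl⟩
  · rintro B ⟨C, hC, rfl⟩
    rw [negSet_image _ flip_neg]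
    intro h
    exact hat_not_selfneg hC (flip_invol.injective.image_injective h)

end DecodeSection

section DecodeProps

variable {n : ℕ} {R N : Finset ℤ}

lemma prt_decode (hB : Ballot n R) {a b : ℤ} (hm : Matches R a b) :
    prt (decode R N) b = flip R N a := by
  have hπd : P2sym n (decode R N) := P2sym_decode hB
  have hp := matches_pos hm
  have hab := hm.2.1
  have hmem : ({b, flip R N a} : Set ℤ) ∈ decode R N := by
    refine ⟨{a, b}, ⟨a, b, hm, Or.inl rfl⟩, ?_⟩
    simp only
    rw [Set.image_pair, flip_closer hm.2.2.1 (by omega), Set.pair_comm]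
  apply prt_eq hπd _ hmem
  have : |flip R N a| = a := by rw [flip_abs, abs_of_pos (by omega)]
  intro h
  rw [h, abs_of_pos (by omega)] at this
  omega

lemma Rfin_decode (hB : Ballot n R) : Rfin n (decode R N) = R := by
  have hπd : P2sym n (decode R N) := P2sym_decode hB
  have hsub : R ⊆ Rfin n (decode R N) := by
    intro b hb
    obtain ⟨a, hm⟩ := hB.matches_of_mem hb
    have hp := matches_pos hm
    have hab := hm.2.1
    rw [mem_Rfin_iff hπd]
    refine ⟨by omega, hB.le_two_n hb, ?_⟩
    rw [prt_decode hB hm, flip_abs, abs_of_pos (by omega)]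
    omega
  have := Finset.eq_of_subset_of_card_le hsub (by rw [card_Rfin hπd, hB.2.1])
  exact this.symm

lemma good_decode (hB : Ballot n R) : GoodP n (decode R N) := by
  intro b hb
  rw [Rfin_decode hB] at hb ⊢
  obtain ⟨a, hm⟩ := hB.matches_of_mem hb
  have hp := matches_pos hm
  rw [prt_decode hB hm, flip_abs, abs_of_pos (by omega)]
  exact hm

lemma Nfin_decode (hB : Ballot n R) (hN : N ⊆ R) : Nfin n (decode R N) = N := by
  ext b
  simp only [Nfin, Finset.mem_filter, Rfin_decode hB]
  constructor
  · rintro ⟨hbR, hlt⟩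
    obtain ⟨a, hm⟩ := hB.matches_of_mem hbR
    have hp := matches_pos hm
    rw [prt_decode hB hm] at hlt
    by_contra hbN
    rw [flip_opener_not_mem hm hbN] at hlt
    omega
  · intro hbN
    have hbR : b ∈ R := hN hbN
    obtain ⟨a, hm⟩ := hB.matches_of_mem hbR
    have hp := matches_pos hm
    refine ⟨hbR, ?_⟩
    rw [prt_decode hB hm, flip_opener_mem hm hbN]
    omega

lemma cNeg_decode (hB : Ballot n R) (hN : N ⊆ R) : cNeg n (decode R N) = N.card := by
  rw [cNeg_eq_card_Nfin (P2sym_decode hB) (good_decode hB), Nfin_decode hB hN]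

lemma alo_decode (hB : Ballot n R) : AllCyclesLengthOne n (decode R N) :=
  alo_of_good (P2sym_decode hB) (good_decode hB)

end DecodeProps

lemma flip_prt_eq (hπ : P2sym n π) (hG : GoodP n π) {b : ℤ} (hb : b ∈ Rfin n π) :
    flip (Rfin n π) (Nfin n π) (|prt π b|) = prt π b := by
  have hm := hG b hb
  have hbpm := pm_of_Rfin hπ hb
  rcases lt_or_gt_of_ne (prt_ne_zero hπ hbpm) with hsign | hsign
  · have hbN : b ∈ Nfin n π := by
      simp only [Nfin, Finset.mem_filter]
      exact ⟨hb, hsign⟩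
    rw [flip_opener_mem hm hbN, abs_of_neg hsign, neg_neg]
  · have hbN : b ∉ Nfin n π := by
      simp only [Nfin, Finset.mem_filter]
      rintro ⟨-, h⟩
      omega
    rw [flip_opener_not_mem hm hbN, abs_of_pos hsign]

lemma decode_of_good (hπ : P2sym n π) (hG : GoodP n π) :
    decode (Rfin n π) (Nfin n π) = π := by
  have hB := ballot_Rfin hπ
  have hπd : P2sym n (decode (Rfin n π) (Nfin n π)) := P2sym_decode hB
  ext B
  constructor
  · rintro ⟨C, hC, rfl⟩
    obtain ⟨a, b, hm, hc | hc⟩ := hC <;> subst hc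
    · have hb : b ∈ Rfin n π := hm.2.2.1
      have ha : a = |prt π b| := matches_unique_left hm (hG b hb)
      simp only
      rw [Set.image_pair, flip_closer hm.2.2.1 (by have := matches_pos hm; omega), ha,
        flip_prt_eq hπ hG hb]
      exact Pb_mem hπ (pm_of_Rfin hπ hb)
    · have hb : b ∈ Rfin n π := hm.2.2.1
      have ha : a = |prt π b| := matches_unique_left hm (hG b hb)
      simp only
      rw [Set.image_pair, flip_neg, flip_neg,
        flip_closer hm.2.2.1 (by have := matches_pos hm; omega), ha,
        flip_prt_eq hπ hG hb, Set.pair_comm]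
      exact mPb_mem hπ (pm_of_Rfin hπ hb)
  · intro hB'
    obtain ⟨b, hb, hc | hc⟩ := pi_block_classify hπ hB' <;> subst hc
    · refine ⟨{|prt π b|, b}, Cb_mem hG hb, ?_⟩
      simp only
      rw [Set.image_pair, flip_closer hb (by have := (mem_Rfin_iff hπ).1 hb; omega),
        flip_prt_eq hπ hG hb]
    · refine ⟨{-b, -|prt π b|}, mCb_mem hG hb, ?_⟩
      simp only
      rw [Set.image_pair, flip_neg, flip_neg,
        flip_closer hb (by have := (mem_Rfin_iff hπ).1 hb; omega),
        flip_prt_eq hπ hG hb, Set.pair_comm]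

/-! ### Counting -/

def BallotF (n : ℕ) : Finset (Finset ℤ) :=
  @Finset.filter _ (fun R => Ballot n R) (Classical.decPred _)
    (Finset.Icc 1 (2 * n : ℤ)).powerset

def DomF (n : ℕ) : Finset (Finset ℤ × Finset ℤ) :=
  @Finset.filter _ (fun p => Ballot n p.1 ∧ p.2 ⊆ p.1) (Classical.decPred _)
    ((Finset.Icc 1 (2 * n : ℤ)).powerset ×ˢ (Finset.Icc 1 (2 * n : ℤ)).powerset)

lemma mem_BallotF {n : ℕ} {R : Finset ℤ} : R ∈ BallotF n ↔ Ballot n R := by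
  classical
  unfold BallotF
  simp only [Finset.mem_filter, Finset.mem_powerset]
  exact ⟨fun h => h.2, fun h => ⟨h.1, h⟩⟩

lemma mem_DomF {n : ℕ} {p : Finset ℤ × Finset ℤ} :
    p ∈ DomF n ↔ Ballot n p.1 ∧ p.2 ⊆ p.1 := by
  classical
  unfold DomF
  simp only [Finset.mem_filter, Finset.mem_product, Finset.mem_powerset]
  constructor
  · exact fun h => h.2
  · rintro ⟨h1, h2⟩
    exact ⟨⟨h1.1, h2.trans h1.1⟩, h1, h2⟩

lemma bijOn_decode (n : ℕ) :
    Set.BijOn (fun p : Finset ℤ × Finset ℤ => decode p.1 p.2) ↑(DomF n)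
      {π : Set (Set ℤ) | P2sym n π ∧ AllCyclesLengthOne n π} := by
  refine ⟨?_, ?_, ?_⟩
  · intro p hp
    rw [Finset.mem_coe, mem_DomF] at hp
    exact ⟨P2sym_decode hp.1, alo_decode hp.1⟩
  · intro p hp q hq heq
    rw [Finset.mem_coe, mem_DomF] at hp hq
    change decode p.1 p.2 = decode q.1 q.2 at heq
    have h1 : p.1 = q.1 := by
      rw [← Rfin_decode (N := p.2) hp.1, ← Rfin_decode (N := q.2) hq.1, heq]
    have h2 : p.2 = q.2 := by
      rw [← Nfin_decode hp.1 hp.2, ← Nfin_decode hq.1 hq.2, heq]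
    exact Prod.ext h1 h2
  · rintro π ⟨hπ, hALO⟩
    have hG := good_of_alo hπ hALO
    refine ⟨(Rfin n π, Nfin n π), ?_, decode_of_good hπ hG⟩
    rw [Finset.mem_coe, mem_DomF]
    exact ⟨ballot_Rfin hπ, Finset.filter_subset _ _⟩

lemma sum_powerset_pow (x : ℂ) (s : Finset ℤ) :
    ∑ t ∈ s.powerset, x ^ t.card = (x + 1) ^ s.card := by
  have h := Finset.prod_add (fun _ => x) (fun _ => (1 : ℂ)) s
  simp only [Finset.prod_const, one_pow, mul_one] at h
  rw [← h]

lemma sum_DomF (n : ℕ) (qm : ℂ) :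
    ∑ p ∈ DomF n, qm ^ p.2.card = ((BallotF n).card : ℂ) * (1 + qm) ^ n := by
  classical
  have hstep : ∑ p ∈ DomF n, qm ^ p.2.card
      = ∑ s ∈ (BallotF n).sigma (fun R => R.powerset), qm ^ s.2.card := by
    apply Finset.sum_nbij' (i := fun p => (⟨p.1, p.2⟩ : Σ _ : Finset ℤ, Finset ℤ))
      (j := fun s => (s.1, s.2))
    · intro p hp
      rw [mem_DomF] at hp
      rw [Finset.mem_sigma, mem_BallotF, Finset.mem_powerset]
      exact hp
    · intro s hs
      rw [Finset.mem_sigma, mem_BallotF, Finset.mem_powerset] at hs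
      rw [mem_DomF]
      exact hs
    · intro p hp; rfl
    · intro s hs; rfl
    · intro p hp; rfl
  rw [hstep, Finset.sum_sigma]
  have hconst : ∀ R ∈ BallotF n, ∑ N ∈ R.powerset, qm ^ N.card = (1 + qm) ^ n := by
    intro R hR
    rw [mem_BallotF] at hR
    rw [sum_powerset_pow, hR.2.1, add_comm]
  rw [Finset.sum_congr rfl hconst, Finset.sum_const, nsmul_eq_mul]

lemma main_sum (n : ℕ) (qm : ℂ) :
    (∑ᶠ π ∈ {π : Set (Set ℤ) | P2sym n π ∧ AllCyclesLengthOne n π}, qm ^ cNeg n π)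
      = ((BallotF n).card : ℂ) * (1 + qm) ^ n := by
  have h := finsum_mem_eq_of_bijOn (M := ℂ)
    (f := fun p : Finset ℤ × Finset ℤ => qm ^ p.2.card)
    (g := fun π => qm ^ cNeg n π)
    (fun p : Finset ℤ × Finset ℤ => decode p.1 p.2) (bijOn_decode n) ?_
  · rw [← h, finsum_mem_coe_finset, sum_DomF]
  · intro p hp
    rw [Finset.mem_coe, mem_DomF] at hp
    show qm ^ p.2.card = qm ^ cNeg n (decode p.1 p.2)
    rw [cNeg_decode hp.1 hp.2]

/-! ### Ballot sets are counted by Catalan numbers, via Dyck words -/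

open DyckStep in
def toW (n : ℕ) (R : Finset ℤ) : List DyckStep :=
  List.ofFn (fun i : Fin (2 * n) => if ((i : ℤ) + 1) ∈ R then D else U)

open DyckStep in
lemma count_UD_eq_length (l : List DyckStep) : l.count U + l.count D = l.length := by
  induction l with
  | nil => simp
  | cons h t ih =>
    cases h <;> simp [List.count_cons] <;> omega

lemma card_filter_le_succ (R : Finset ℤ) (k : ℤ) :
    (R.filter (fun x => x ≤ k + 1)).card
      = (R.filter (fun x => x ≤ k)).card + (if (k + 1) ∈ R then 1 else 0) := by
  by_cases h : (k + 1) ∈ R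
  · have := ht_step_mem (R := R) h
    simp only [ht, add_sub_cancel_right] at this
    simp only [if_pos h]
    omega
  · have := ht_step_not (R := R) h
    simp only [ht, add_sub_cancel_right] at this
    simp only [if_neg h]
    omega

open DyckStep in
lemma toW_length (n : ℕ) (R : Finset ℤ) : (toW n R).length = 2 * n :=
  List.length_ofFn

open DyckStep in
lemma count_D_take (n : ℕ) (R : Finset ℤ) (hR : R ⊆ Finset.Icc 1 (2 * n : ℤ)) :
    ∀ k : ℕ, k ≤ 2 * n →
      ((toW n R).take k).count D = (R.filter (fun x => x ≤ (k : ℤ))).card := by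
  intro k
  induction k with
  | zero =>
    intro _
    simp only [List.take_zero, List.count_nil]
    symm
    rw [Finset.card_eq_zero, Finset.filter_eq_empty_iff]
    intro x hx
    have := hR hx
    rw [Finset.mem_Icc] at this
    push_cast
    omega
  | succ k ih =>
    intro hk
    have hk' : k ≤ 2 * n := by omega
    have hklt : k < 2 * n := by omega
    rw [List.take_succ, List.count_append, ih hk']
    have hget : (toW n R)[k]? = some (if ((k : ℤ) + 1) ∈ R then D else U) := by
      simp [toW, List.getElem?_ofFn, hklt]
    rw [hget]
    have hc : ((k : ℤ) + 1 : ℤ) = ((k + 1 : ℕ) : ℤ) := by push_cast; ring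
    rw [← hc, card_filter_le_succ]
    by_cases h : ((k : ℤ) + 1) ∈ R
    · simp [h]
    · simp [h]

open DyckStep in
lemma count_D_toW {n : ℕ} {R : Finset ℤ} (hB : Ballot n R) :
    (toW n R).count D = n := by
  have h := count_D_take n R hB.1 (2 * n) le_rfl
  rw [List.take_of_length_le (by rw [toW_length])] at h
  rw [h]
  have : R.filter (fun x => x ≤ ((2 * n : ℕ) : ℤ)) = R := by
    rw [Finset.filter_eq_self]
    intro x hx
    have := hB.le_two_n hx
    push_cast
    omega
  rw [this, hB.2.1]

open DyckStep in
lemma count_U_toW {n : ℕ} {R : Finset ℤ} (hB : Ballot n R) :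
    (toW n R).count U = n := by
  have := count_UD_eq_length (toW n R)
  rw [toW_length, count_D_toW hB] at this
  omega

open DyckStep in
lemma prefix_toW {n : ℕ} {R : Finset ℤ} (hB : Ballot n R) (i : ℕ) :
    ((toW n R).take i).count D ≤ ((toW n R).take i).count U := by
  by_cases hi : i ≤ 2 * n
  · have hD := count_D_take n R hB.1 i hi
    have hlen : ((toW n R).take i).length = i := by
      rw [List.length_take, toW_length]
      omega
    have hUD := count_UD_eq_length ((toW n R).take i)
    rw [hlen] at hUD
    have hht := hB.2.2 (i : ℤ) (by positivity)
    rw [ht] at hht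
    omega
  · rw [List.take_of_length_le (by rw [toW_length]; omega)]
    rw [count_D_toW hB, count_U_toW hB]

open Classical in
noncomputable def toDW (n : ℕ) (R : Finset ℤ) : DyckWord :=
  if hB : Ballot n R then
    ⟨toW n R, by rw [count_D_toW hB, count_U_toW hB], fun i => prefix_toW hB i⟩
  else 0

lemma toDW_toList {n : ℕ} {R : Finset ℤ} (hB : Ballot n R) :
    (toDW n R).toList = toW n R := by
  rw [toDW, dif_pos hB]

lemma toDW_semilength {n : ℕ} {R : Finset ℤ} (hB : Ballot n R) :
    (toDW n R).semilength = n := by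
  rw [DyckWord.semilength, toDW_toList hB, count_U_toW hB]

open DyckStep in
lemma toW_inj {n : ℕ} {R R' : Finset ℤ} (hB : Ballot n R) (hB' : Ballot n R')
    (h : toW n R = toW n R') : R = R' := by
  have key : ∀ i : ℕ, i < 2 * n → (((i : ℤ) + 1) ∈ R ↔ ((i : ℤ) + 1) ∈ R') := by
    intro i hi
    have h1 : (toW n R)[i]'(by rw [toW_length]; omega)
        = (toW n R')[i]'(by rw [toW_length]; omega) := by
      congr 1
    simp only [toW, List.getElem_ofFn] at h1
    by_cases hc : ((i : ℤ) + 1) ∈ R <;> by_cases hc' : ((i : ℤ) + 1) ∈ R' <;>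
      simp [hc, hc'] at h1 ⊢
  ext x
  constructor
  · intro hx
    have hb := hB.1 hx
    rw [Finset.mem_Icc] at hb
    have hi : ((x - 1).toNat : ℤ) = x - 1 := by omega
    have := key (x - 1).toNat (by omega)
    rw [hi] at this
    simp only [sub_add_cancel] at this
    exact this.1 hx
  · intro hx
    have hb := hB'.1 hx
    rw [Finset.mem_Icc] at hb
    have hi : ((x - 1).toNat : ℤ) = x - 1 := by omega
    have := key (x - 1).toNat (by omega)
    rw [hi] at this
    simp only [sub_add_cancel] at this
    exact this.2 hx

open DyckStep in
lemma toDW_surj (n : ℕ) (p : DyckWord) (hp : p.semilength = n) :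
    ∃ R, Ballot n R ∧ toDW n R = p := by
  classical
  set R := (Finset.Icc 1 (2 * n : ℤ)).filter
    (fun x => p.toList.getD (x - 1).toNat U = D) with hRdef
  have hplen : p.toList.length = 2 * n := by
    rw [← p.two_mul_semilength_eq_length, hp]
  have hRsub : R ⊆ Finset.Icc 1 (2 * n : ℤ) := Finset.filter_subset _ _
  have hmemR : ∀ i : ℕ, ∀ hi : i < 2 * n, ((((i : ℤ) + 1) ∈ R) ↔ p.toList[i]'(by omega) = D) := by
    intro i hi
    rw [hRdef, Finset.mem_filter, Finset.mem_Icc]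
    have h1 : (((i : ℤ) + 1 - 1).toNat) = i := by omega
    rw [h1]
    rw [List.getD_eq_getElem p.toList U (by omega)]
    constructor
    · exact fun h => h.2
    · intro h
      exact ⟨⟨by omega, by push_cast; omega⟩, h⟩
  have hlist : toW n R = p.toList := by
    apply List.ext_getElem (by rw [toW_length, hplen])
    intro i h1 h2
    have hi : i < 2 * n := by rwa [toW_length] at h1
    simp only [toW, List.getElem_ofFn]
    by_cases hc : ((i : ℤ) + 1) ∈ R
    · rw [if_pos hc]
      exact ((hmemR i hi).1 hc).symm
    · rw [if_neg hc]
      rcases (p.toList[i]'h2).dichotomy with h | h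
      · exact h.symm
      · exact absurd ((hmemR i hi).2 h) hc
  -- counting
  have hcount : ∀ k : ℕ, k ≤ 2 * n →
      (R.filter (fun x => x ≤ (k : ℤ))).card = (p.toList.take k).count D := by
    intro k hk
    rw [← count_D_take n R hRsub k hk, hlist]
  have hcardR : R.card = n := by
    have h := hcount (2 * n) le_rfl
    rw [List.take_of_length_le (by omega)] at h
    have h2 : R.filter (fun x => x ≤ ((2 * n : ℕ) : ℤ)) = R := by
      rw [Finset.filter_eq_self]
      intro x hx
      have := hRsub hx
      rw [Finset.mem_Icc] at this
      push_cast
      omega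
    rw [h2] at h
    rw [h, ← DyckWord.semilength_eq_count_D, hp]
  have hB : Ballot n R := by
    refine ⟨hRsub, hcardR, ?_⟩
    intro k hk
    by_cases hk2 : k ≤ 2 * (n : ℤ)
    · have hkn : k = ((k.toNat : ℕ) : ℤ) := by omega
      have hkle : k.toNat ≤ 2 * n := by omega
      have h := hcount k.toNat hkle
      have hUD := count_UD_eq_length (p.toList.take k.toNat)
      have hlen : (p.toList.take k.toNat).length = k.toNat := by
        rw [List.length_take]
        omega
      have hle := p.count_D_le_count_U k.toNat
      rw [ht, hkn, h]
      omega
    · have hfull : R.filter (fun x => x ≤ k) = R := by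
        rw [Finset.filter_eq_self]
        intro x hx
        have := hRsub hx
        rw [Finset.mem_Icc] at this
        omega
      rw [ht, hfull, hcardR]
      omega
  refine ⟨R, hB, ?_⟩
  apply DyckWord.ext
  rw [toDW_toList hB, hlist]

lemma card_BallotF (n : ℕ) : (BallotF n).card = catalan n := by
  classical
  rw [← DyckWord.card_dyckWord_semilength_eq_catalan n, Fintype.card]
  apply Finset.card_bij
    (i := fun R hR => (⟨toDW n R, toDW_semilength (mem_BallotF.1 hR)⟩ :
      {p : DyckWord // p.semilength = n}))
  · intro R hR
    exact Finset.mem_univ _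
  · intro R hR R' hR' heq
    have h1 : toDW n R = toDW n R' := congrArg Subtype.val heq
    have h2 : toW n R = toW n R' := by
      rw [← toDW_toList (mem_BallotF.1 hR), ← toDW_toList (mem_BallotF.1 hR'), h1]
    exact toW_inj (mem_BallotF.1 hR) (mem_BallotF.1 hR') h2
  · intro q hq
    obtain ⟨R, hB, hR⟩ := toDW_surj n q.1 q.2
    exact ⟨R, mem_BallotF.2 hB, Subtype.ext hR⟩
/-- Σ_{π ∈ P₂^{sym}(2n), all cycles of length 1} q₋^{c₋(π)}
= C_n · (1+q₋)ⁿ, where C_n is the n-th Catalan number. -/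
theorem catalan_specialization (n : ℕ) (qm : ℂ) :
    (∑ᶠ π ∈ {π : Set (Set ℤ) | P2sym n π ∧ AllCyclesLengthOne n π}, qm ^ cNeg n π)
      = (_root_.catalan n : ℂ) * (1 + qm) ^ n := by
  rw [main_sum n qm, card_BallotF n]

end TypeB
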